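/- arXiv:1206.5349 — 5 statements merged into one kernel-verified Lean document; each statement's English description precedes it below -/
import Mathlib

section
/- Denoising Lemma: if y = Ax + η where x is uniform on {-1,1}^n and η is an independent mean-zero Gaussian vector with covariance Σ, then P(u) := -κ4(u^T y) = 2 \sum_{i=1}^n (u^T A)_i^4 for every u ∈ R^n; in particular P(u) does not depend on Σ. -/
open MeasureTheory ProbabilityTheory

section DenoisingAux

open Real Set

noncomputable def denoiseSgn (t : Bool) : ℝ := if t then 1 else -1

lemma denoise_even_moment_aux {b : ℝ} (hb : 0 < b) (k : ℕ) :
    ∫ x : ℝ, x ^ (2*k) * Real.exp (-b * x^2)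
      = (1/b) ^ ((2*(k:ℝ)+1)/2) * Real.Gamma ((2*(k:ℝ)+1)/2) := by
  have h1 : ∫ x : ℝ, x ^ (2*k) * Real.exp (-b * x^2)
      = 2 * ∫ x in Ioi (0:ℝ), x ^ (2*k) * Real.exp (-b * x^2) := by
    rw [← integral_comp_abs (f := fun x => x ^ (2*k) * Real.exp (-b * x^2))]
    congr 1; ext x
    rw [pow_mul, pow_mul, sq_abs]
  rw [h1]
  have h2 := integral_comp_rpow_Ioi_of_pos
    (g := fun t : ℝ => t ^ ((2*(k:ℝ)+1)/2 - 1) * Real.exp (-(b*t))) (p := 2) two_pos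
  rw [← Real.integral_rpow_mul_exp_neg_mul_Ioi (by positivity : (0:ℝ) < (2*(k:ℝ)+1)/2) hb,
    ← h2, ← MeasureTheory.integral_const_mul]
  refine setIntegral_congr_fun measurableSet_Ioi (fun x hx => ?_)
  have hx0 : (0:ℝ) < x := hx
  have hxp : x ^ (2:ℝ) = x ^ 2 := by
    rw [show (2:ℝ) = ((2:ℕ):ℝ) by norm_num, Real.rpow_natCast]
  rw [smul_eq_mul, hxp]
  have h3 : (x ^ 2 : ℝ) ^ ((2*(k:ℝ)+1)/2 - 1) = x ^ (2*k - 1 : ℝ) := by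
    rw [← Real.rpow_natCast x 2, ← Real.rpow_mul hx0.le]
    congr 1; push_cast; ring
  rw [h3]
  have h4 : x ^ (2*(k:ℝ) - 1) = x ^ (2*k) / x := by
    rw [show (2*(k:ℝ) - 1) = 2*k - 1 by ring, Real.rpow_sub hx0,
      Real.rpow_one, show ((2:ℝ)*k) = ((2*k : ℕ):ℝ) by push_cast; ring, Real.rpow_natCast]
  rw [h4]
  have h5 : -(b * x^2) = -b * x^2 := by ring
  rw [h5]
  have h6 : (2:ℝ) * x ^ ((2:ℝ) - 1) = 2 * x := by norm_num
  rw [h6]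
  field_simp

lemma denoise_gauss_density_integral (v : NNReal) (hv : v ≠ 0) (f : ℝ → ℝ) :
    ∫ x, f x ∂(gaussianReal 0 v) = ∫ x, gaussianPDFReal 0 v x * f x := by
  rw [gaussianReal_of_var_ne_zero _ hv, gaussianPDF_def]
  have h : ∀ x : ℝ, ENNReal.ofReal (gaussianPDFReal 0 v x)
      = ((gaussianPDFReal 0 v x).toNNReal : ENNReal) := fun x => rfl
  simp_rw [h]
  rw [integral_withDensity_eq_integral_smul
    ((measurable_gaussianPDFReal 0 v).real_toNNReal) f]
  congr 1; ext x
  rw [NNReal.smul_def, smul_eq_mul, Real.coe_toNNReal _ (gaussianPDFReal_nonneg 0 v x)]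

lemma denoise_integrable_pow_gaussianReal (v : NNReal) (m : ℕ) :
    Integrable (fun x : ℝ => x ^ m) (gaussianReal 0 v) := by
  by_cases hv : v = 0
  · subst hv
    rw [gaussianReal_zero_var]
    refine (integrable_const ((0:ℝ) ^ m)).congr ?_
    rw [ae_dirac_eq]
    exact Filter.eventually_pure.2 rfl
  · rw [gaussianReal_of_var_ne_zero _ hv, gaussianPDF_def]
    have h : ∀ x : ℝ, ENNReal.ofReal (gaussianPDFReal 0 v x)
        = ((gaussianPDFReal 0 v x).toNNReal : ENNReal) := fun x => rfl
    simp_rw [h]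
    rw [integrable_withDensity_iff_integrable_smul
      ((measurable_gaussianPDFReal 0 v).real_toNNReal)]
    have hw : (0:ℝ) < v := by positivity
    have hb : (0:ℝ) < (2 * (v:ℝ))⁻¹ := by positivity
    have hint : Integrable (fun x : ℝ => x ^ (m:ℝ) * Real.exp (-(2*(v:ℝ))⁻¹ * x ^ 2)) :=
      integrable_rpow_mul_exp_neg_mul_sq hb
        (lt_of_lt_of_le neg_one_lt_zero (Nat.cast_nonneg m))
    refine ((hint.const_mul ((Real.sqrt (2 * Real.pi * v))⁻¹)).congr ?_)
    refine Filter.Eventually.of_forall (fun x => ?_)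
    dsimp only
    rw [NNReal.smul_def, smul_eq_mul, Real.coe_toNNReal _ (gaussianPDFReal_nonneg 0 v x),
      gaussianPDFReal]
    rw [Real.rpow_natCast]
    ring_nf

lemma denoise_integral_pow_gaussianReal_odd (v : NNReal) (m : ℕ) (hm : Odd m) :
    ∫ x, x ^ m ∂(gaussianReal 0 v) = 0 := by
  have h := gaussianReal_map_const_mul (μ := 0) (v := v) (-1)
  norm_num at h
  have h3 : ∫ x, x ^ m ∂(gaussianReal 0 v)
      = ∫ x, (-x) ^ m ∂(gaussianReal 0 v) := by
    nth_rewrite 1 [← h]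
    exact integral_map measurable_neg.aemeasurable
      (f := fun x : ℝ => x ^ m) ((measurable_id.pow_const m).aestronglyMeasurable)
  have h4 : ∀ x : ℝ, (-x) ^ m = -(x ^ m) := fun x => hm.neg_pow x
  simp_rw [h4, integral_neg] at h3
  linarith

lemma denoise_gamma_three_half : Real.Gamma (3/2) = Real.sqrt π / 2 := by
  rw [show (3/2:ℝ) = 1/2 + 1 by norm_num, Real.Gamma_add_one (by norm_num),
    Real.Gamma_one_half_eq]
  ring

lemma denoise_gamma_five_half : Real.Gamma (5/2) = 3 * Real.sqrt π / 4 := by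
  rw [show (5/2:ℝ) = 3/2 + 1 by norm_num, Real.Gamma_add_one (by norm_num),
    denoise_gamma_three_half]
  ring

lemma denoise_integral_even_pow_gaussianReal (v : NNReal) (hv : v ≠ 0) (k : ℕ) :
    ∫ x, x ^ (2*k) ∂(gaussianReal 0 v)
      = (Real.sqrt (2 * π * v))⁻¹ * ((2*(v:ℝ)) ^ ((2*(k:ℝ)+1)/2)
          * Real.Gamma ((2*(k:ℝ)+1)/2)) := by
  have hw : (0:ℝ) < v := by positivity
  have hb : (0:ℝ) < (2*(v:ℝ))⁻¹ := by positivity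
  rw [denoise_gauss_density_integral v hv]
  have h1 : ∀ x : ℝ, gaussianPDFReal 0 v x * x ^ (2*k)
      = (Real.sqrt (2 * π * v))⁻¹ * (x ^ (2*k) * Real.exp (-(2*(v:ℝ))⁻¹ * x^2)) := by
    intro x
    rw [gaussianPDFReal]
    have : -(x - 0)^2/(2*(v:ℝ)) = -(2*(v:ℝ))⁻¹ * x^2 := by ring
    rw [this]; ring
  simp_rw [h1]
  rw [integral_const_mul, denoise_even_moment_aux hb k]
  rw [one_div, inv_inv]

lemma denoise_integral_sq_gaussianReal (v : NNReal) :
    ∫ x, x ^ 2 ∂(gaussianReal 0 v) = v := by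
  by_cases hv : v = 0
  · subst hv
    rw [gaussianReal_zero_var, integral_dirac]
    norm_num
  · have hw : (0:ℝ) < v := by positivity
    have h := denoise_integral_even_pow_gaussianReal v hv 1
    norm_num at h
    rw [h, denoise_gamma_three_half]
    have h2 : ((2*(v:ℝ)) : ℝ) ^ ((3:ℝ)/2) = (2*(v:ℝ)) * Real.sqrt (2*(v:ℝ)) := by
      rw [show ((3:ℝ)/2) = 1 + 1/2 by norm_num, Real.rpow_add (by positivity),
        Real.rpow_one, Real.sqrt_eq_rpow]
    rw [h2]
    have h4 : Real.sqrt (2*(v:ℝ)) = Real.sqrt 2 * Real.sqrt (v:ℝ) := Real.sqrt_mul (by norm_num) _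
    rw [h4]
    have hs1 : Real.sqrt π ≠ 0 := by positivity
    have hs2 : Real.sqrt (2:ℝ) ≠ 0 := by positivity
    have hs3 : Real.sqrt (v:ℝ) ≠ 0 := by positivity
    have hs4 : Real.sqrt (v:ℝ) * Real.sqrt (v:ℝ) = (v:ℝ) := Real.mul_self_sqrt hw.le
    field_simp

lemma denoise_integral_fourth_gaussianReal (v : NNReal) :
    ∫ x, x ^ 4 ∂(gaussianReal 0 v) = 3 * (v:ℝ)^2 := by
  by_cases hv : v = 0
  · subst hv
    rw [gaussianReal_zero_var, integral_dirac]
    norm_num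
  · have hw : (0:ℝ) < v := by positivity
    have h := denoise_integral_even_pow_gaussianReal v hv 2
    norm_num at h
    rw [h, denoise_gamma_five_half]
    have h2 : ((2*(v:ℝ)) : ℝ) ^ ((5:ℝ)/2) = (2*(v:ℝ))^2 * Real.sqrt (2*(v:ℝ)) := by
      rw [show ((5:ℝ)/2) = 2 + 1/2 by norm_num, Real.rpow_add (by positivity),
        Real.sqrt_eq_rpow, Real.rpow_two]
      try ring
    rw [h2]
    have h4 : Real.sqrt (2*(v:ℝ)) = Real.sqrt 2 * Real.sqrt (v:ℝ) := Real.sqrt_mul (by norm_num) _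
    rw [h4]
    have hs1 : Real.sqrt π ≠ 0 := by positivity
    have hs2 : Real.sqrt (2:ℝ) ≠ 0 := by positivity
    have hs3 : Real.sqrt (v:ℝ) ≠ 0 := by positivity
    have hs4 : Real.sqrt (v:ℝ) * Real.sqrt (v:ℝ) = (v:ℝ) := Real.mul_self_sqrt hw.le
    field_simp
    try nlinarith [hs4, Real.sq_sqrt hw.le]

lemma denoise_rademacher_sums (n : ℕ) (v : Fin n → ℝ) :
    (∑ b : Fin n → Bool, (∑ i, v i * denoiseSgn (b i)) = 0)
    ∧ (∑ b : Fin n → Bool, (∑ i, v i * denoiseSgn (b i))^2 = 2^n * ∑ i, v i ^ 2)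
    ∧ (∑ b : Fin n → Bool, (∑ i, v i * denoiseSgn (b i))^3 = 0)
    ∧ (∑ b : Fin n → Bool, (∑ i, v i * denoiseSgn (b i))^4
        = 2^n * (3 * (∑ i, v i ^ 2)^2 - 2 * ∑ i, v i ^ 4)) := by
  induction n with
  | zero => simp
  | succ n ih =>
    obtain ⟨ih1, ih2, ih3, ih4⟩ := ih (fun i => v i.succ)
    have key : ∀ k : ℕ, ∑ b : Fin (n+1) → Bool, (∑ i, v i * denoiseSgn (b i))^k
        = ∑ b : Fin n → Bool,
            (((∑ i : Fin n, v i.succ * denoiseSgn (b i)) + v 0)^k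
              + ((∑ i : Fin n, v i.succ * denoiseSgn (b i)) - v 0)^k) := by
      intro k
      rw [← (Fin.consEquiv (fun _ => Bool)).sum_comp
        (fun b => (∑ i, v i * denoiseSgn (b i))^k), Fintype.sum_prod_type, Fintype.sum_bool]
      rw [Finset.sum_add_distrib]
      congr 1
      · refine Finset.sum_congr rfl (fun b _ => ?_)
        congr 1
        rw [Fin.sum_univ_succ]
        simp [Fin.consEquiv, denoiseSgn, add_comm]
      · refine Finset.sum_congr rfl (fun b _ => ?_)
        congr 1
        rw [Fin.sum_univ_succ]
        simp [Fin.consEquiv, denoiseSgn, sub_eq_add_neg, add_comm]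
    refine ⟨?_, ?_, ?_, ?_⟩
    · have k1 := key 1
      simp only [pow_one] at k1
      rw [k1]
      have : ∀ b : Fin n → Bool,
          ((∑ i : Fin n, v i.succ * denoiseSgn (b i)) + v 0)^1
            + ((∑ i : Fin n, v i.succ * denoiseSgn (b i)) - v 0)^1
          = 2 * (∑ i : Fin n, v i.succ * denoiseSgn (b i)) := by intro b; ring
      simp only [pow_one] at this
      simp_rw [this]
      rw [← Finset.mul_sum, ih1, mul_zero]
    · rw [key 2]
      have : ∀ b : Fin n → Bool,
          ((∑ i : Fin n, v i.succ * denoiseSgn (b i)) + v 0)^2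
            + ((∑ i : Fin n, v i.succ * denoiseSgn (b i)) - v 0)^2
          = 2 * (∑ i : Fin n, v i.succ * denoiseSgn (b i))^2 + 2 * (v 0)^2 := by
        intro b; ring
      simp_rw [this]
      rw [Finset.sum_add_distrib, ← Finset.mul_sum, ih2, Finset.sum_const,
        Finset.card_univ, Fintype.card_fun]
      rw [Fin.sum_univ_succ (f := fun i => v i ^ 2)]
      simp [nsmul_eq_mul]
      ring
    · rw [key 3]
      have : ∀ b : Fin n → Bool,
          ((∑ i : Fin n, v i.succ * denoiseSgn (b i)) + v 0)^3
            + ((∑ i : Fin n, v i.succ * denoiseSgn (b i)) - v 0)^3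
          = 2 * (∑ i : Fin n, v i.succ * denoiseSgn (b i))^3
            + 6 * (v 0)^2 * (∑ i : Fin n, v i.succ * denoiseSgn (b i)) := by
        intro b; ring
      simp_rw [this]
      rw [Finset.sum_add_distrib, ← Finset.mul_sum, ih3, ← Finset.mul_sum, ih1]
      ring
    · rw [key 4]
      have : ∀ b : Fin n → Bool,
          ((∑ i : Fin n, v i.succ * denoiseSgn (b i)) + v 0)^4
            + ((∑ i : Fin n, v i.succ * denoiseSgn (b i)) - v 0)^4
          = 2 * (∑ i : Fin n, v i.succ * denoiseSgn (b i))^4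
            + 12 * (v 0)^2 * (∑ i : Fin n, v i.succ * denoiseSgn (b i))^2
            + 2 * (v 0)^4 := by intro b; ring
      simp_rw [this]
      rw [Finset.sum_add_distrib, Finset.sum_add_distrib, ← Finset.mul_sum, ih4,
        ← Finset.mul_sum, ih2, Finset.sum_const, Finset.card_univ, Fintype.card_fun]
      rw [Fin.sum_univ_succ (f := fun i => v i ^ 2), Fin.sum_univ_succ (f := fun i => v i ^ 4)]
      simp [nsmul_eq_mul]
      ring

end DenoisingAux

/-- Denoising Lemma: if `y = Ax + η` where `x` is uniform on `{-1,1}^n`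
(encoded by a uniformly distributed sign pattern `s`) and `η` is an independent
mean-zero Gaussian vector with covariance `Σ` (every one-dimensional projection
`u ⬝ η` is Gaussian with variance `uᵀΣu`), then
`P(u) := -κ₄(uᵀ y) = 2 ∑ i (uᵀA)_i^4`; in particular it does not depend on `Σ`. -/
theorem denoising_lemma
    {Ω : Type*} [MeasurableSpace Ω] (μ : Measure Ω) [IsProbabilityMeasure μ]
    (n : ℕ) (A Sig : Matrix (Fin n) (Fin n) ℝ)
    (s : Ω → Fin n → Bool) (η : Ω → Fin n → ℝ)
    (hs : Measure.map s μ = (PMF.uniformOfFintype (Fin n → Bool)).toMeasure)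
    (hη : ∀ w : Fin n → ℝ,
      Measure.map (fun ω => ∑ i, w i * η ω i) μ =
        gaussianReal 0 (Real.toNNReal (dotProduct w (Sig.mulVec w))))
    (hind : IndepFun s η μ)
    (u : Fin n → ℝ)
    (x : Ω → Fin n → ℝ) (hx : x = fun ω i => if s ω i then (1 : ℝ) else -1)
    (y : Ω → Fin n → ℝ) (hy : y = fun ω => A.mulVec (x ω) + η ω) :
    -((∫ ω, (∑ i, u i * y ω i) ^ 4 ∂μ)
        - 3 * (∫ ω, (∑ i, u i * y ω i) ^ 2 ∂μ) ^ 2)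
      = 2 * ∑ i, Matrix.vecMul u A i ^ 4 := by
  classical
  set w : Fin n → ℝ := Matrix.vecMul u A with hw
  set var : NNReal := Real.toNNReal (dotProduct u (Sig.mulVec u)) with hvar
  set T : Ω → ℝ := fun ω => ∑ i, w i * denoiseSgn (s ω i) with hT
  set G : Ω → ℝ := fun ω => ∑ i, u i * η ω i with hG
  -- pointwise decomposition
  have hpt : ∀ ω, ∑ i, u i * y ω i = T ω + G ω := by
    intro ω
    rw [hy]
    simp only [Pi.add_apply]
    have h0 : ∀ i, u i * ((A.mulVec (x ω)) i + η ω i)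
        = u i * (A.mulVec (x ω)) i + u i * η ω i := fun i => by ring
    simp_rw [h0]
    rw [Finset.sum_add_distrib]
    congr 1
    have h1 : ∑ i, u i * (A.mulVec (x ω)) i = dotProduct u (A.mulVec (x ω)) := rfl
    rw [h1, Matrix.dotProduct_mulVec]
    rw [hx, hT]
    simp [dotProduct, denoiseSgn, hw]
  -- ae-measurability
  have hsae : AEMeasurable s μ := by
    by_contra hc
    rw [Measure.map_of_not_aemeasurable hc] at hs
    have := congrArg (fun m : Measure (Fin n → Bool) => m Set.univ) hs
    simp at this
  have hGmap : Measure.map G μ = gaussianReal 0 var := hη u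
  have hGae : AEMeasurable G μ := by
    by_contra hc
    rw [Measure.map_of_not_aemeasurable hc] at hGmap
    have := congrArg (fun m : Measure ℝ => m Set.univ) hGmap
    simp at this
  have hfmeas : ∀ k : ℕ,
      Measurable (fun b : Fin n → Bool => (∑ i, w i * denoiseSgn (b i)) ^ k) :=
    fun k => measurable_of_countable _
  have hgmeas : ∀ m : ℕ, Measurable (fun z : Fin n → ℝ => (∑ i, u i * z i) ^ m) :=
    fun m => (Finset.measurable_sum _
      (fun i _ => (measurable_pi_apply i).const_mul _)).pow_const m
  -- independence of powers
  have hindTG : ∀ k m : ℕ, IndepFun (fun ω => T ω ^ k) (fun ω => G ω ^ m) μ := by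
    intro k m
    exact hind.comp (hfmeas k) (hgmeas m)
  -- integrability
  have hintT : ∀ k : ℕ, Integrable (fun ω => T ω ^ k) μ := by
    intro k
    have h1 : Integrable (fun b : Fin n → Bool => (∑ i, w i * denoiseSgn (b i)) ^ k)
        (Measure.map s μ) := by
      rw [hs]; exact .of_finite
    exact (integrable_map_measure (hfmeas k).aestronglyMeasurable hsae).mp h1
  have hintG : ∀ m : ℕ, Integrable (fun ω => G ω ^ m) μ := by
    intro m
    have h1 : Integrable (fun x : ℝ => x ^ m) (Measure.map G μ) := by
      rw [hGmap]; exact denoise_integrable_pow_gaussianReal var m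
    exact (integrable_map_measure
      ((measurable_id.pow_const m).aestronglyMeasurable) hGae).mp h1
  have hintP : ∀ k m : ℕ, Integrable (fun ω => T ω ^ k * G ω ^ m) μ := fun k m =>
    (hindTG k m).integrable_mul (hintT k) (hintG m)
  have hprod : ∀ k m : ℕ, ∫ ω, T ω ^ k * G ω ^ m ∂μ
      = (∫ ω, T ω ^ k ∂μ) * (∫ ω, G ω ^ m ∂μ) := fun k m =>
    (hindTG k m).integral_fun_mul_eq_mul_integral (hintT k).aestronglyMeasurable
      (hintG m).aestronglyMeasurable
  -- moments of T
  have hTmom : ∀ k : ℕ, ∫ ω, T ω ^ k ∂μ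
      = ((2^n : ℝ))⁻¹ * ∑ b : Fin n → Bool, (∑ i, w i * denoiseSgn (b i)) ^ k := by
    intro k
    have h1 := integral_map hsae (hfmeas k).aestronglyMeasurable
    rw [hT]
    rw [← h1, hs, PMF.integral_eq_sum, Finset.mul_sum]
    refine Finset.sum_congr rfl fun b _ => ?_
    rw [PMF.uniformOfFintype_apply, smul_eq_mul]
    congr 1
    rw [ENNReal.toReal_inv]
    congr 1
    rw [Fintype.card_fun]
    simp
  have hGmom : ∀ m : ℕ, ∫ ω, G ω ^ m ∂μ = ∫ x, x ^ m ∂(gaussianReal 0 var) := by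
    intro m
    rw [← hGmap]
    exact (integral_map hGae (f := fun x : ℝ => x ^ m)
      ((measurable_id.pow_const m).aestronglyMeasurable)).symm
  -- specific values
  obtain ⟨hr1, hr2, hr3, hr4⟩ := denoise_rademacher_sums n w
  have h2n : ((2:ℝ)^n) ≠ 0 := by positivity
  have t0 : ∫ ω, T ω ^ 0 ∂μ = 1 := by simp
  have g0 : ∫ ω, G ω ^ 0 ∂μ = 1 := by simp
  have t1 : ∫ ω, T ω ^ 1 ∂μ = 0 := by
    rw [hTmom 1]
    simp only [pow_one]
    rw [hr1, mul_zero]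
  have t2 : ∫ ω, T ω ^ 2 ∂μ = ∑ i, w i ^ 2 := by
    rw [hTmom 2, hr2, ← mul_assoc, inv_mul_cancel₀ h2n, one_mul]
  have t3 : ∫ ω, T ω ^ 3 ∂μ = 0 := by
    rw [hTmom 3, hr3, mul_zero]
  have t4 : ∫ ω, T ω ^ 4 ∂μ = 3 * (∑ i, w i ^ 2)^2 - 2 * ∑ i, w i ^ 4 := by
    rw [hTmom 4, hr4, ← mul_assoc, inv_mul_cancel₀ h2n, one_mul]
  have g1 : ∫ ω, G ω ^ 1 ∂μ = 0 := by
    rw [hGmom 1, denoise_integral_pow_gaussianReal_odd var 1 ⟨0, by norm_num⟩]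
  have g3 : ∫ ω, G ω ^ 3 ∂μ = 0 := by
    rw [hGmom 3, denoise_integral_pow_gaussianReal_odd var 3 ⟨1, by norm_num⟩]
  have g2 : ∫ ω, G ω ^ 2 ∂μ = (var:ℝ) := by
    rw [hGmom 2, denoise_integral_sq_gaussianReal]
  have g4 : ∫ ω, G ω ^ 4 ∂μ = 3 * (var:ℝ)^2 := by
    rw [hGmom 4, denoise_integral_fourth_gaussianReal]
  -- expansion of second moment
  have E2 : ∫ ω, (T ω + G ω) ^ 2 ∂μ = (∑ i, w i ^ 2) + (var:ℝ) := by
    have hex : ∀ a b : ℝ, (a + b)^2 = a^2 * b^0 + (2 * (a^1 * b^1) + a^0 * b^2) :=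
      fun a b => by ring
    simp_rw [hex]
    have hA : Integrable (fun ω => 2 * (T ω ^ 1 * G ω ^ 1) + T ω ^ 0 * G ω ^ 2) μ :=
      ((hintP 1 1).const_mul 2).add (hintP 0 2)
    rw [integral_add (hintP 2 0) hA,
      integral_add ((hintP 1 1).const_mul 2) (hintP 0 2),
      integral_const_mul, hprod 2 0, hprod 1 1, hprod 0 2,
      t2, g0, t1, g1, t0, g2]
    ring
  have E4 : ∫ ω, (T ω + G ω) ^ 4 ∂μ
      = (3 * (∑ i, w i ^ 2)^2 - 2 * ∑ i, w i ^ 4)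
        + 6 * (∑ i, w i ^ 2) * (var:ℝ) + 3 * (var:ℝ)^2 := by
    have hex : ∀ a b : ℝ, (a + b)^4
        = a^4 * b^0 + (4 * (a^3 * b^1) + (6 * (a^2 * b^2)
            + (4 * (a^1 * b^3) + a^0 * b^4))) := fun a b => by ring
    simp_rw [hex]
    have hC : Integrable (fun ω => 4 * (T ω ^ 1 * G ω ^ 3) + T ω ^ 0 * G ω ^ 4) μ :=
      ((hintP 1 3).const_mul 4).add (hintP 0 4)
    have hB : Integrable (fun ω => 6 * (T ω ^ 2 * G ω ^ 2)
        + (4 * (T ω ^ 1 * G ω ^ 3) + T ω ^ 0 * G ω ^ 4)) μ :=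
      ((hintP 2 2).const_mul 6).add hC
    have hA : Integrable (fun ω => 4 * (T ω ^ 3 * G ω ^ 1)
        + (6 * (T ω ^ 2 * G ω ^ 2) + (4 * (T ω ^ 1 * G ω ^ 3) + T ω ^ 0 * G ω ^ 4))) μ :=
      ((hintP 3 1).const_mul 4).add hB
    rw [integral_add (hintP 4 0) hA,
      integral_add ((hintP 3 1).const_mul 4) hB,
      integral_add ((hintP 2 2).const_mul 6) hC,
      integral_add ((hintP 1 3).const_mul 4) (hintP 0 4),
      integral_const_mul, integral_const_mul, integral_const_mul,
      hprod 4 0, hprod 3 1, hprod 2 2, hprod 1 3, hprod 0 4,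
      t4, g0, t3, g1, t2, g2, t1, g3, t0, g4]
    ring
  simp only [hpt]
  rw [E2, E4]
  ring
end

section
/- Critical points of the quartic on the sphere: a unit vector v is a local maximum of f(v) = \sum_{i=1}^n d_i v_i^4 (with all d_i > 0) on the unit sphere only if v = ±e_i for some standard basis vector e_i; conversely every ±e_i is a local maximum. -/
open Filter Set Metric Topology

private lemma sum_sq_of_norm_one {n : ℕ} {v : EuclideanSpace ℝ (Fin n)}
    (hv : ‖v‖ = 1) : ∑ k, v k ^ 2 = 1 := by
  have h := EuclideanSpace.norm_eq v
  rw [hv] at h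
  have h2 : (1:ℝ) = Real.sqrt (∑ k, v k ^ 2) := by
    simpa [Real.norm_eq_abs, sq_abs] using h
  have hnn : (0:ℝ) ≤ ∑ k, v k ^ 2 := Finset.sum_nonneg fun k _ => sq_nonneg _
  nlinarith [Real.sq_sqrt hnn]

/-- sign helper -/
private noncomputable def sg (x : ℝ) : ℝ := if x < 0 then -1 else 1

private lemma sg_sq (x : ℝ) : sg x ^ 2 = 1 := by
  unfold sg; split_ifs <;> norm_num

private lemma sg_mul_sqrt_sq (x : ℝ) : sg x * Real.sqrt (x ^ 2) = x := by
  rw [Real.sqrt_sq_eq_abs]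
  unfold sg; split_ifs with h
  · rw [abs_of_neg h]; ring
  · rw [abs_of_nonneg (not_lt.mp h)]; ring

/-- No local max can have two nonzero coordinates (with the larger `d v²` at `i`). -/
private lemma aux_no_two {n : ℕ} (d : Fin n → ℝ) (hd : ∀ i, 0 < d i)
    (v : EuclideanSpace ℝ (Fin n)) (hv : ‖v‖ = 1) (i j : Fin n) (hij : i ≠ j)
    (hvj : v j ≠ 0)
    (hge : d j * v j ^ 2 ≤ d i * v i ^ 2)
    (hmax : IsLocalMaxOn (fun w : EuclideanSpace ℝ (Fin n) => ∑ k, d k * w k ^ 4)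
      (Metric.sphere (0 : EuclideanSpace ℝ (Fin n)) 1) v) : False := by
  classical
  set g : ℝ → Fin n → ℝ := fun t k =>
    if k = i then sg (v i) * Real.sqrt (v i ^ 2 + t)
    else if k = j then sg (v j) * Real.sqrt (v j ^ 2 - t) else v k with hg
  set w : ℝ → EuclideanSpace ℝ (Fin n) :=
    fun t => (WithLp.equiv 2 (Fin n → ℝ)).symm (g t) with hw
  have hwapp : ∀ t k, w t k = g t k := fun t k =>
    PiLp.toLp_apply (p := 2) (x := g t) (i := k)
  have hvj2 : 0 < v j ^ 2 := by positivity
  -- squares of coordinates, for 0 ≤ t ≤ v j ^ 2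
  have hsq : ∀ t : ℝ, 0 ≤ t → t ≤ v j ^ 2 → ∀ k,
      (g t k) ^ 2 = v k ^ 2 + (if k = i then t else if k = j then -t else 0) := by
    intro t ht ht' k
    simp only [hg]
    split_ifs with h1 h2
    · subst h1
      rw [mul_pow, sg_sq, one_mul, Real.sq_sqrt (by positivity)]
    · subst h2
      rw [mul_pow, sg_sq, one_mul, Real.sq_sqrt (by linarith)]
      ring
    · rw [add_zero]
  have hsum : ∀ t : ℝ, 0 ≤ t → t ≤ v j ^ 2 → ∑ k, (g t k) ^ 2 = 1 := by
    intro t ht ht'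
    have hpt : ∀ k, (g t k) ^ 2
        = v k ^ 2 + ((if k = i then t else 0) + (if k = j then -t else 0)) := by
      intro k
      rw [hsq t ht ht' k]
      congr 1
      split_ifs with h1 h2
      · exact absurd (h1.symm.trans h2) hij
      · ring
      · ring
      · ring
    rw [Finset.sum_congr rfl (fun k _ => hpt k), Finset.sum_add_distrib,
      Finset.sum_add_distrib,
      Finset.sum_ite_eq' Finset.univ i (fun _ => t),
      Finset.sum_ite_eq' Finset.univ j (fun _ => -t)]
    simp [sum_sq_of_norm_one hv]
  -- sphere membership
  have hmem : ∀ t : ℝ, 0 ≤ t → t ≤ v j ^ 2 →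
      w t ∈ Metric.sphere (0 : EuclideanSpace ℝ (Fin n)) 1 := by
    intro t ht ht'
    rw [mem_sphere_zero_iff_norm, EuclideanSpace.norm_eq]
    have : ∑ k, ‖w t k‖ ^ 2 = 1 := by
      simp only [Real.norm_eq_abs, sq_abs, hwapp]
      exact hsum t ht ht'
    rw [this, Real.sqrt_one]
  -- value of f
  have hval : ∀ t : ℝ, 0 ≤ t → t ≤ v j ^ 2 →
      ∑ k, d k * (w t k) ^ 4
        = (∑ k, d k * v k ^ 4)
          + (2 * d i * v i ^ 2 * t + d i * t ^ 2)
          + (-(2 * d j * v j ^ 2 * t) + d j * t ^ 2) := by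
    intro t ht ht'
    have hpt : ∀ k, d k * (w t k) ^ 4
        = d k * v k ^ 4 + ((if k = i then 2 * d i * v i ^ 2 * t + d i * t ^ 2 else 0)
            + (if k = j then -(2 * d j * v j ^ 2 * t) + d j * t ^ 2 else 0)) := by
      intro k
      have h4 : (w t k) ^ 4 = ((g t k) ^ 2) ^ 2 := by rw [hwapp]; ring
      rw [h4, hsq t ht ht' k]
      split_ifs with h1 h2 h3
      · exact absurd (h1.symm.trans h2) hij
      · subst h1; ring
      · subst h3; ring
      · ring
    rw [Finset.sum_congr rfl (fun k _ => hpt k), Finset.sum_add_distrib,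
      Finset.sum_add_distrib,
      Finset.sum_ite_eq' Finset.univ i, Finset.sum_ite_eq' Finset.univ j]
    simp
    ring
  -- continuity: w t → v as t → 0
  have hg0 : g 0 = fun k => v k := by
    funext k
    simp only [hg]
    split_ifs with h1 h2
    · subst h1; rw [add_zero, sg_mul_sqrt_sq]
    · subst h2; rw [sub_zero, sg_mul_sqrt_sq]
    · rfl
  have hw0 : w 0 = v := by
    rw [hw]
    simp only [hg0]
    rfl
  have hcont : Continuous w := by
    apply (PiLp.continuous_toLp 2 (fun _ : Fin n => ℝ)).comp
    apply continuous_pi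
    intro k
    simp only [hg]
    split_ifs with h1 h2
    · exact continuous_const.mul (Real.continuous_sqrt.comp (by continuity))
    · exact continuous_const.mul (Real.continuous_sqrt.comp (by continuity))
    · exact continuous_const
  have hIoo : Set.Ioo (0:ℝ) (v j ^ 2) ∈ 𝓝[Set.Ioi (0:ℝ)] 0 :=
    Ioo_mem_nhdsGT_of_mem ⟨le_refl _, hvj2⟩
  have htend : Tendsto w (𝓝[Set.Ioi (0:ℝ)] 0)
      (𝓝[Metric.sphere (0 : EuclideanSpace ℝ (Fin n)) 1] v) := by
    apply tendsto_nhdsWithin_of_tendsto_nhds_of_eventually_within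
    · have h := hcont.tendsto 0
      rw [hw0] at h
      exact h.mono_left nhdsWithin_le_nhds
    · filter_upwards [hIoo] with t ht
      exact hmem t ht.1.le ht.2.le
  have h1 : ∀ᶠ t in 𝓝[Set.Ioi (0:ℝ)] 0,
      ∑ k, d k * (w t k) ^ 4 ≤ ∑ k, d k * v k ^ 4 := htend.eventually hmax
  have h2 : ∀ᶠ t in 𝓝[Set.Ioi (0:ℝ)] 0,
      (∑ k, d k * v k ^ 4) < ∑ k, d k * (w t k) ^ 4 := by
    filter_upwards [hIoo] with t ht
    rw [hval t ht.1.le ht.2.le]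
    nlinarith [mul_nonneg (sub_nonneg.mpr hge) ht.1.le,
      mul_pos (hd i) (pow_pos ht.1 2), mul_pos (hd j) (pow_pos ht.1 2)]
  obtain ⟨t, ht1, ht2⟩ := (h1.and h2).exists
  exact absurd ht1 (not_le.mpr ht2)

/-- `±e_i`-type vectors are local maxima. -/
private lemma aux_max {n : ℕ} (d : Fin n → ℝ) (hd : ∀ i, 0 < d i) (i : Fin n)
    (u : EuclideanSpace ℝ (Fin n)) (hui : u i ^ 2 = 1) (hu0 : ∀ k, k ≠ i → u k = 0) :
    IsLocalMaxOn (fun w : EuclideanSpace ℝ (Fin n) => ∑ k, d k * w k ^ 4)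
      (Metric.sphere (0 : EuclideanSpace ℝ (Fin n)) 1) u := by
  classical
  set D : ℝ := ∑ k, d k with hD
  have hdD : ∀ k, d k ≤ D := fun k =>
    Finset.single_le_sum (f := d) (fun k _ => (hd k).le) (Finset.mem_univ k)
  have hDpos : 0 < D := lt_of_lt_of_le (hd i) (hdD i)
  have hiD : (0:ℝ) < d i + D := by have := hd i; linarith
  have hfu : (∑ k, d k * u k ^ 4) = d i := by
    rw [Finset.sum_eq_single i]
    · have h4 : u i ^ 4 = (u i ^ 2) ^ 2 := by ring
      rw [h4, hui]; ring
    · intro k _ hk; rw [hu0 k hk]; ring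
    · intro h; exact absurd (Finset.mem_univ i) h
  set r : ℝ := Real.sqrt (d i / (d i + D)) with hr
  have hrpos : 0 < r := Real.sqrt_pos.mpr (div_pos (hd i) hiD)
  have hgoal : ∀ᶠ x in 𝓝[Metric.sphere (0 : EuclideanSpace ℝ (Fin n)) 1] u,
      (fun w : EuclideanSpace ℝ (Fin n) => ∑ k, d k * w k ^ 4) x
        ≤ (fun w : EuclideanSpace ℝ (Fin n) => ∑ k, d k * w k ^ 4) u := by
    rw [Filter.eventually_iff, Metric.mem_nhdsWithin_iff]
    refine ⟨r, hrpos, ?_⟩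
    rintro w ⟨hwball, hwsph⟩
    simp only [Set.mem_setOf_eq, hfu]
    -- s = sum of off-i squares
    set s : ℝ := ∑ k ∈ Finset.univ.erase i, w k ^ 2 with hs
    have hsnn : 0 ≤ s := Finset.sum_nonneg fun k _ => sq_nonneg _
    have hsum1 : w i ^ 2 + s = 1 := by
      rw [hs, Finset.add_sum_erase _ (fun k => w k ^ 2) (Finset.mem_univ i)]
      exact sum_sq_of_norm_one (mem_sphere_zero_iff_norm.mp hwsph)
    have hdist : dist w u < r := by simpa [Metric.mem_ball] using hwball
    have hde : dist w u = Real.sqrt (∑ k, (w k - u k) ^ 2) := by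
      rw [EuclideanSpace.dist_eq]
      congr 1
      refine Finset.sum_congr rfl fun k _ => ?_
      rw [Real.dist_eq, sq_abs]
    have hsum_nn : (0:ℝ) ≤ ∑ k, (w k - u k) ^ 2 :=
      Finset.sum_nonneg fun k _ => sq_nonneg _
    have h1 : ∑ k, (w k - u k) ^ 2 < d i / (d i + D) := by
      rw [hde, hr] at hdist
      exact ((Real.sqrt_lt_sqrt_iff hsum_nn).mp hdist)
    have h2 : s ≤ ∑ k, (w k - u k) ^ 2 := by
      rw [← Finset.add_sum_erase _ (fun k => (w k - u k) ^ 2) (Finset.mem_univ i)]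
      have he : ∑ k ∈ Finset.univ.erase i, (w k - u k) ^ 2 = s := by
        refine Finset.sum_congr rfl fun k hk => ?_
        rw [hu0 k (Finset.mem_erase.mp hk).1, sub_zero]
      rw [he]
      nlinarith [sq_nonneg (w i - u i)]
    have hdist2 : s ≤ d i / (d i + D) := by linarith
    have hkey0 : s * (d i + D) ≤ d i := (le_div_iff₀ hiD).mp hdist2
    -- bound the off-i part of f
    have hoff : ∑ k ∈ Finset.univ.erase i, d k * w k ^ 4 ≤ D * s ^ 2 := by
      have hterm : ∀ k ∈ Finset.univ.erase i, d k * w k ^ 4 ≤ D * (w k ^ 2 * s) := by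
        intro k hk
        have hk2 : w k ^ 2 ≤ s :=
          Finset.single_le_sum (f := fun k => w k ^ 2) (fun k _ => sq_nonneg _) hk
        have a1 : d k * w k ^ 4 ≤ D * w k ^ 4 :=
          mul_le_mul_of_nonneg_right (hdD k) (by positivity)
        have a2 : D * w k ^ 4 ≤ D * (w k ^ 2 * s) := by
          apply mul_le_mul_of_nonneg_left _ hDpos.le
          calc w k ^ 4 = w k ^ 2 * w k ^ 2 := by ring
            _ ≤ w k ^ 2 * s := mul_le_mul_of_nonneg_left hk2 (sq_nonneg _)
        linarith
      calc ∑ k ∈ Finset.univ.erase i, d k * w k ^ 4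
          ≤ ∑ k ∈ Finset.univ.erase i, D * (w k ^ 2 * s) := Finset.sum_le_sum hterm
        _ = D * s * ∑ k ∈ Finset.univ.erase i, w k ^ 2 := by
            rw [Finset.mul_sum]; exact Finset.sum_congr rfl fun k _ => by ring
        _ = D * s ^ 2 := by rw [← hs]; ring
    have hfsplit : ∑ k, d k * w k ^ 4
        = d i * w i ^ 4 + ∑ k ∈ Finset.univ.erase i, d k * w k ^ 4 :=
      (Finset.add_sum_erase _ (fun k => d k * w k ^ 4) (Finset.mem_univ i)).symm
    rw [hfsplit]
    have hwi4 : w i ^ 4 = (1 - s) ^ 2 := by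
      have h4 : w i ^ 4 = (w i ^ 2) ^ 2 := by ring
      rw [h4]
      have : w i ^ 2 = 1 - s := by linarith
      rw [this]
    rw [hwi4]
    nlinarith [hsnn, hkey0, hd i]
  exact hgoal

/-- Critical points of the quartic on the sphere: a unit vector `v` is a local
maximum of `f(v) = ∑ i d_i v_i^4` (all `d_i > 0`) on the unit sphere only if
`v = ±e_i` for some standard basis vector; conversely every `±e_i` is a local maximum. -/
theorem local_maxima_of_quartic_on_sphere
    (n : ℕ) (d : Fin n → ℝ) (hd : ∀ i, 0 < d i) :
    (∀ v : EuclideanSpace ℝ (Fin n), ‖v‖ = 1 →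
        IsLocalMaxOn (fun w : EuclideanSpace ℝ (Fin n) => ∑ i, d i * w i ^ 4)
          (Metric.sphere (0 : EuclideanSpace ℝ (Fin n)) 1) v →
        ∃ i, v = EuclideanSpace.single i (1 : ℝ) ∨ v = -EuclideanSpace.single i (1 : ℝ))
    ∧ (∀ i : Fin n,
        IsLocalMaxOn (fun w : EuclideanSpace ℝ (Fin n) => ∑ i, d i * w i ^ 4)
          (Metric.sphere (0 : EuclideanSpace ℝ (Fin n)) 1)
          (EuclideanSpace.single i (1 : ℝ))
        ∧ IsLocalMaxOn (fun w : EuclideanSpace ℝ (Fin n) => ∑ i, d i * w i ^ 4)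
          (Metric.sphere (0 : EuclideanSpace ℝ (Fin n)) 1)
          (-EuclideanSpace.single i (1 : ℝ))) := by
  classical
  constructor
  · intro v hv hmax
    obtain ⟨i, hvi⟩ : ∃ i, v i ≠ 0 := by
      by_contra h
      push_neg at h
      have hsum := sum_sq_of_norm_one hv
      rw [Finset.sum_eq_zero (fun k _ => by rw [h k]; ring)] at hsum
      norm_num at hsum
    by_cases hj : ∃ j, j ≠ i ∧ v j ≠ 0
    · obtain ⟨j, hji, hvj⟩ := hj
      exfalso
      by_cases hge : d j * v j ^ 2 ≤ d i * v i ^ 2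
      · exact aux_no_two d hd v hv i j (Ne.symm hji) hvj hge hmax
      · exact aux_no_two d hd v hv j i hji hvi (le_of_not_ge hge) hmax
    · push_neg at hj
      have hzero : ∀ k, k ≠ i → v k = 0 := fun k hk => hj k hk
      have hvi2 : v i ^ 2 = 1 := by
        have hsum := sum_sq_of_norm_one hv
        rw [Finset.sum_eq_single i (fun k _ hk => by rw [hzero k hk]; ring)
          (fun h => absurd (Finset.mem_univ i) h)] at hsum
        exact hsum
      refine ⟨i, ?_⟩
      have hcase : v i = 1 ∨ v i = -1 := by
        rcases mul_eq_zero.mp (show (v i - 1) * (v i + 1) = 0 by nlinarith) with h | h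
        · left; linarith
        · right; linarith
      rcases hcase with h | h
      · left
        ext k
        by_cases hk : k = i
        · subst hk; simp [EuclideanSpace.single_apply, h]
        · simp [EuclideanSpace.single_apply, hk, hzero k hk]
      · right
        ext k
        by_cases hk : k = i
        · subst hk; simp [EuclideanSpace.single_apply, h]
        · simp [EuclideanSpace.single_apply, hk, hzero k hk]
  · intro i
    constructor
    · apply aux_max d hd i
      · simp [EuclideanSpace.single_apply]
      · intro k hk; simp [EuclideanSpace.single_apply, hk]
    · apply aux_max d hd i
      · simp [EuclideanSpace.single_apply]
      · intro k hk; simp [EuclideanSpace.single_apply, hk]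
end

section
/- Coupling of orthogonal complements: let v*_1,…,v*_n be an orthonormal basis of R^n and v_1,…,v_k unit vectors with ||v_i - v*_i||_2 ≤ γ for i ≤ k, where γ < 0.01. Then for every unit vector v orthogonal to span{v_1,…,v_k}, the projection of v onto span{v*_{k+1},…,v*_n} has squared norm at least 1 - 4n γ^2. -/
/-- Coupling of orthogonal complements: let `v*_1,…,v*_n` be an orthonormal basis
of `ℝⁿ` and `v_1,…,v_k` unit vectors with `‖v_i - v*_i‖ ≤ γ < 0.01`. Then every unit
vector `w` orthogonal to `span{v_1,…,v_k}` has squared projection onto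
`span{v*_{k+1},…,v*_n}` at least `1 - 4nγ²`. -/
theorem coupling_orthogonal_complements
    (n k : ℕ) (hk : k ≤ n) (γ : ℝ) (hγ0 : 0 < γ) (hγ : γ < 0.01)
    (vstar : Fin n → EuclideanSpace ℝ (Fin n)) (hON : Orthonormal ℝ vstar)
    (v : Fin k → EuclideanSpace ℝ (Fin n)) (hunit : ∀ i, ‖v i‖ = 1)
    (hclose : ∀ i : Fin k, ‖v i - vstar (Fin.castLE hk i)‖ ≤ γ)
    (w : EuclideanSpace ℝ (Fin n)) (hw : ‖w‖ = 1)
    (horth : ∀ i : Fin k, inner ℝ (v i) w = (0 : ℝ)) :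
    1 - 4 * n * γ ^ 2 ≤
      ‖(Submodule.orthogonalProjection
          (Submodule.span ℝ {x | ∃ i : Fin n, k ≤ (i : ℕ) ∧ x = vstar i}) w :
        EuclideanSpace ℝ (Fin n))‖ ^ 2 := by
  classical
  set K := Submodule.span ℝ {x | ∃ i : Fin n, k ≤ (i : ℕ) ∧ x = vstar i} with hK
  set c : Fin n → ℝ := fun i => inner ℝ (vstar i) w with hc
  set F : Finset (Fin n) := Finset.univ.filter (fun i => k ≤ (i : ℕ)) with hF
  set a : EuclideanSpace ℝ (Fin n) := ∑ i ∈ F, c i • vstar i with ha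
  -- a ∈ K
  have haK : a ∈ K := by
    refine Submodule.sum_mem _ fun i hi => Submodule.smul_mem _ _ ?_
    exact Submodule.subset_span ⟨i, (Finset.mem_filter.mp hi).2, rfl⟩
  -- w - a ∈ Kᗮ
  have horthK : w - a ∈ Kᗮ := by
    rw [Submodule.mem_orthogonal]
    intro u hu
    induction hu using Submodule.span_induction with
    | mem x hx =>
      obtain ⟨i, hik, rfl⟩ := hx
      have hiF : i ∈ F := Finset.mem_filter.mpr ⟨Finset.mem_univ _, hik⟩
      rw [inner_sub_right, ha, hON.inner_right_sum c hiF]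
      simp [hc]
    | zero => simp
    | add x y _ _ hx hy => rw [inner_add_left, hx, hy]; ring
    | smul r x _ hx => rw [real_inner_smul_left, hx]; ring
  have hproj : (Submodule.orthogonalProjection K w : EuclideanSpace ℝ (Fin n)) = a :=
    (Submodule.starProjection_apply K w).symm.trans (Submodule.eq_starProjection_of_mem_orthogonal haK horthK)
  rw [hproj]
  -- ‖a‖² = ∑ i in F, c i ^ 2
  have hnormsq : ‖a‖ ^ 2 = ∑ i ∈ F, c i ^ 2 := by
    have := hON.inner_sum c c F
    rw [ha, ← real_inner_self_eq_norm_sq]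
    simpa [pow_two] using this
  -- Parseval: ∑ i, c i ^ 2 = 1
  have hn0 : 0 < n := by
    rcases Nat.eq_zero_or_pos n with h0 | h0
    · exfalso
      subst h0
      have : w = 0 := Subsingleton.elim _ _
      rw [this, norm_zero] at hw
      norm_num at hw
    · exact h0
  have hsp : ⊤ ≤ Submodule.span ℝ (Set.range vstar) := by
    rw [hON.linearIndependent.span_eq_top_of_card_eq_finrank'
      (by simp [finrank_euclideanSpace_fin])]
  let b : OrthonormalBasis (Fin n) ℝ (EuclideanSpace ℝ (Fin n)) :=
    OrthonormalBasis.mk hON hsp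
  have hb : ⇑b = vstar := OrthonormalBasis.coe_mk hON hsp
  have hparseval : ∑ i, c i ^ 2 = 1 := by
    have := b.sum_inner_mul_inner w w
    rw [real_inner_self_eq_norm_sq, hw] at this
    rw [one_pow] at this
    rw [← this]
    refine Finset.sum_congr rfl fun i _ => ?_
    rw [hb, hc]
    simp only []
    rw [real_inner_comm w (vstar i)]
    ring
  -- bound on the small coefficients
  have hsplit : ∑ i ∈ F, c i ^ 2 = 1 - ∑ i ∈ Fᶜ, c i ^ 2 := by
    have := Finset.sum_add_sum_compl F (fun i => c i ^ 2)
    rw [hparseval] at this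
    linarith
  have hbound : ∑ i ∈ Fᶜ, c i ^ 2 ≤ k * γ ^ 2 := by
    have hterm : ∀ i ∈ Fᶜ, c i ^ 2 ≤ γ ^ 2 := by
      intro i hi
      have hik : (i : ℕ) < k := by
        simp only [hF, Finset.mem_compl, Finset.mem_filter, Finset.mem_univ, true_and,
          not_le] at hi
        exact hi
      set j : Fin k := ⟨(i : ℕ), hik⟩ with hj
      have hcast : Fin.castLE hk j = i := by ext; rfl
      have hci : c i = inner ℝ (vstar i - v j) w := by
        rw [inner_sub_left, horth j, hc]; ring
      have habs : |c i| ≤ γ := by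
        rw [hci]
        calc |inner ℝ (vstar i - v j) w| ≤ ‖vstar i - v j‖ * ‖w‖ := abs_real_inner_le_norm _ _
          _ = ‖v j - vstar (Fin.castLE hk j)‖ := by rw [hw, hcast, norm_sub_rev, mul_one]
          _ ≤ γ := hclose j
      calc c i ^ 2 = |c i| ^ 2 := (sq_abs _).symm
        _ ≤ γ ^ 2 := by
            apply pow_le_pow_left₀ (abs_nonneg _) habs _
    calc ∑ i ∈ Fᶜ, c i ^ 2 ≤ ∑ _i ∈ Fᶜ, γ ^ 2 := Finset.sum_le_sum hterm
      _ = Fᶜ.card * γ ^ 2 := by rw [Finset.sum_const, nsmul_eq_mul]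
      _ ≤ k * γ ^ 2 := by
          apply mul_le_mul_of_nonneg_right _ (sq_nonneg γ)
          have : Fᶜ = Finset.image (Fin.castLE hk) Finset.univ := by
            ext i
            simp only [hF, Finset.mem_compl, Finset.mem_filter, Finset.mem_univ, true_and,
              not_le, Finset.mem_image]
            constructor
            · intro hi; exact ⟨⟨(i : ℕ), hi⟩, by ext; rfl⟩
            · rintro ⟨j, rfl⟩; exact j.isLt
          rw [this, Finset.card_image_of_injective _ (Fin.castLE_injective hk),
            Finset.card_univ, Fintype.card_fin]
  have hkn : (k : ℝ) ≤ n := by exact_mod_cast hk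
  nlinarith [hnormsq, hsplit, sq_nonneg γ]
end

section
/- Existence of an aligned orthonormal basis: under the hypotheses of the coupling lemma (orthonormal v*_1,…,v*_n and unit v_1,…,v_k with ||v_i - v*_i|| ≤ γ, γ < 0.01), there exists an orthonormal basis v_{k+1},…,v_n of the orthogonal complement of span{v_1,…,v_k} such that for every unit vector w ∈ R^{n-k}, ||\sum_{i=1}^{n-k} w_i v_{k+i} - \sum_{i=1}^{n-k} w_i v*_{k+i}||_2 ≤ 3 √n γ. -/
set_option maxHeartbeats 1000000

open Submodule Module Finset

local notation "⟪" x ", " y "⟫" => inner (𝕜 := ℝ) x y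

/-- Norm-squared of an orthonormal combination. -/
lemma aligned_norm_sum {ι : Type*} [Fintype ι] {F : Type*} [NormedAddCommGroup F]
    [InnerProductSpace ℝ F] {v : ι → F} (hv : Orthonormal ℝ v) (c : ι → ℝ) :
    ‖∑ i, c i • v i‖ ^ 2 = ∑ i, c i ^ 2 := by
  rw [← real_inner_self_eq_norm_sq]
  rw [hv.inner_sum c c Finset.univ]
  simp [sq]

/-- Pythagoras for the orthogonal projection. -/
lemma aligned_pyth {E : Type*} [NormedAddCommGroup E] [InnerProductSpace ℝ E]
    (Z : Submodule ℝ E) [HasOrthogonalProjection Z] (x : E) :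
    ‖x‖ ^ 2 = ‖x - (orthogonalProjection Z x : E)‖ ^ 2 + ‖(orthogonalProjection Z x : E)‖ ^ 2 := by
  have h0 : ⟪x - (orthogonalProjection Z x : E), (orthogonalProjection Z x : E)⟫ = 0 :=
    Submodule.starProjection_inner_eq_zero (K := Z) x _ (orthogonalProjection Z x).2
  have := norm_add_sq_real (x - (orthogonalProjection Z x : E)) (orthogonalProjection Z x : E)
  simp only [sub_add_cancel, h0] at this
  linarith

/-- Quantitative bound on the component of a unit vector orthogonal to the first `k`
basis vectors, in the direction of `span v`. -/
lemma aligned_proj_bound (n k : ℕ) (hk : k ≤ n) (γ : ℝ) (hγ0 : 0 < γ)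
    (vstar : Fin n → EuclideanSpace ℝ (Fin n)) (hON : Orthonormal ℝ vstar)
    (v : Fin k → EuclideanSpace ℝ (Fin n))
    (hclose : ∀ i : Fin k, ‖v i - vstar (Fin.castLE hk i)‖ ≤ γ)
    (hδ1 : Real.sqrt k * γ < 1)
    (x : EuclideanSpace ℝ (Fin n)) (hx : ‖x‖ = 1)
    (hxo : ∀ j : Fin k, ⟪vstar (Fin.castLE hk j), x⟫ = 0) :
    ‖x - (orthogonalProjection (span ℝ (Set.range v))ᗮ x : EuclideanSpace ℝ (Fin n))‖
      ≤ Real.sqrt k * γ / (1 - Real.sqrt k * γ) := by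
  set δ : ℝ := Real.sqrt k * γ with hδdef
  have hδ0 : 0 ≤ δ := mul_nonneg (Real.sqrt_nonneg _) hγ0.le
  set V : Submodule ℝ (EuclideanSpace ℝ (Fin n)) := span ℝ (Set.range v) with hV
  set p : EuclideanSpace ℝ (Fin n) := x - (orthogonalProjection Vᗮ x : EuclideanSpace ℝ (Fin n))
    with hp
  have hpV : p ∈ V := by
    have h1 : p ∈ Vᗮᗮ := Submodule.sub_starProjection_mem_orthogonal (K := Vᗮ) x
    rwa [Submodule.orthogonal_orthogonal] at h1
  obtain ⟨c, hc⟩ := mem_span_range_iff_exists_fun ℝ |>.mp hpV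
  -- notation
  set N : ℝ := Real.sqrt (∑ j, c j ^ 2) with hN
  have hN0 : 0 ≤ N := Real.sqrt_nonneg _
  set A : ℝ := ∑ j, |c j| with hA
  have hA0 : 0 ≤ A := Finset.sum_nonneg fun _ _ => abs_nonneg _
  have hAN : A ≤ Real.sqrt k * N := by
    have h1 : A ^ 2 ≤ (k : ℝ) * ∑ j, c j ^ 2 := by
      have := sq_sum_le_card_mul_sum_sq (s := Finset.univ) (f := fun j => |c j|)
      simpa [sq_abs] using this
    have h2 : A = Real.sqrt (A ^ 2) := (Real.sqrt_sq hA0).symm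
    rw [h2]
    rw [show Real.sqrt (k : ℝ) * N = Real.sqrt ((k : ℝ) * ∑ j, c j ^ 2) by
      rw [Real.sqrt_mul (Nat.cast_nonneg k)]]
    exact Real.sqrt_le_sqrt h1
  -- ‖p‖² = ⟪x, p⟫
  have hx_p : ⟪x, p⟫ = ‖p‖ ^ 2 := by
    have h0 : ⟪x - p, p⟫ = 0 := by
      have hxp : x - p ∈ Vᗮ := by
        simp only [hp, sub_sub_cancel]
        exact Submodule.coe_mem _
      exact Submodule.inner_left_of_mem_orthogonal hpV hxp
    rw [inner_sub_left] at h0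
    rw [← real_inner_self_eq_norm_sq]
    linarith
  -- ⟪x, p⟫ ≤ γ * A
  have hip : ⟪x, p⟫ ≤ γ * A := by
    rw [← hc, inner_sum]
    have : ∀ j ∈ Finset.univ (α := Fin k), ⟪x, c j • v j⟫ ≤ γ * |c j| := by
      intro j _
      rw [real_inner_smul_right]
      have h1 : ⟪x, v j⟫ = ⟪x, v j - vstar (Fin.castLE hk j)⟫ := by
        have h00 := hxo j
        rw [real_inner_comm] at h00
        rw [inner_sub_right, h00]
        ring
      have h2 : |⟪x, v j⟫| ≤ γ := by
        rw [h1]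
        calc |⟪x, v j - vstar (Fin.castLE hk j)⟫| ≤ ‖x‖ * ‖v j - vstar (Fin.castLE hk j)‖ :=
              abs_real_inner_le_norm _ _
          _ ≤ 1 * γ := by rw [hx]; simpa using hclose j
          _ = γ := one_mul γ
      calc c j * ⟪x, v j⟫ ≤ |c j * ⟪x, v j⟫| := le_abs_self _
        _ = |c j| * |⟪x, v j⟫| := abs_mul _ _
        _ ≤ |c j| * γ := by
            exact mul_le_mul_of_nonneg_left h2 (abs_nonneg _)
        _ = γ * |c j| := mul_comm _ _
    calc ∑ j, ⟪x, c j • v j⟫ ≤ ∑ j, γ * |c j| := Finset.sum_le_sum this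
      _ = γ * A := by rw [hA, Finset.mul_sum]
  -- ‖c‖ lower bound:  (1 - δ) * N ≤ ‖p‖
  have hNp : (1 - δ) * N ≤ ‖p‖ := by
    have hsplit : (∑ j, c j • vstar (Fin.castLE hk j)) =
        p - ∑ j, c j • (v j - vstar (Fin.castLE hk j)) := by
      rw [← hc, ← Finset.sum_sub_distrib]
      congr 1
      ext j : 1
      rw [← smul_sub]
      congr 1
      abel
    have hNstar : ‖∑ j, c j • vstar (Fin.castLE hk j)‖ = N := by
      have hons : Orthonormal ℝ fun j : Fin k => vstar (Fin.castLE hk j) :=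
        hON.comp _ (Fin.castLE_injective hk)
      have := aligned_norm_sum hons c
      rw [hN, ← this, Real.sqrt_sq (norm_nonneg _)]
    have hd : ‖∑ j, c j • (v j - vstar (Fin.castLE hk j))‖ ≤ γ * A := by
      calc ‖∑ j, c j • (v j - vstar (Fin.castLE hk j))‖
          ≤ ∑ j, ‖c j • (v j - vstar (Fin.castLE hk j))‖ := norm_sum_le _ _
        _ ≤ ∑ j, γ * |c j| := by
            refine Finset.sum_le_sum fun j _ => ?_
            rw [norm_smul, Real.norm_eq_abs, mul_comm]
            exact mul_le_mul_of_nonneg_right (hclose j) (abs_nonneg _)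
        _ = γ * A := by rw [hA, Finset.mul_sum]
    have h1 : N ≤ ‖p‖ + γ * A := by
      rw [← hNstar, hsplit]
      calc ‖p - ∑ j, c j • (v j - vstar (Fin.castLE hk j))‖
          ≤ ‖p‖ + ‖∑ j, c j • (v j - vstar (Fin.castLE hk j))‖ := norm_sub_le _ _
        _ ≤ ‖p‖ + γ * A := by linarith
    have h2 : γ * A ≤ δ * N := by
      calc γ * A ≤ γ * (Real.sqrt k * N) := mul_le_mul_of_nonneg_left hAN hγ0.le
        _ = δ * N := by rw [hδdef]; ring
    nlinarith
  -- combine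
  have hp2 : ‖p‖ ^ 2 ≤ δ * N := by
    calc ‖p‖ ^ 2 = ⟪x, p⟫ := hx_p.symm
      _ ≤ γ * A := hip
      _ ≤ γ * (Real.sqrt k * N) := mul_le_mul_of_nonneg_left hAN hγ0.le
      _ = δ * N := by rw [hδdef]; ring
  rcases eq_or_lt_of_le (norm_nonneg p) with h0 | h0
  · rw [← h0]
    exact div_nonneg hδ0 (by linarith)
  · have h1 : (1 - δ) * ‖p‖ ^ 2 ≤ δ * ‖p‖ := by
      calc (1 - δ) * ‖p‖ ^ 2 ≤ (1 - δ) * (δ * N) :=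
            mul_le_mul_of_nonneg_left hp2 (by linarith)
        _ = δ * ((1 - δ) * N) := by ring
        _ ≤ δ * ‖p‖ := mul_le_mul_of_nonneg_left hNp hδ0
    rw [le_div_iff₀ (by linarith)]
    nlinarith

/-- The coordinate map sending `c` to `∑ c i • vs i`. -/
noncomputable def alignedG {n m : ℕ} (vs : Fin m → EuclideanSpace ℝ (Fin n)) :
    EuclideanSpace ℝ (Fin m) →ₗ[ℝ] EuclideanSpace ℝ (Fin n) where
  toFun := fun c => ∑ i, c i • vs i
  map_add' := by
    intro a b
    simp only [PiLp.add_apply, add_smul, Finset.sum_add_distrib]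
  map_smul' := by
    intro a b
    simp only [PiLp.smul_apply, smul_eq_mul, RingHom.id_apply, Finset.smul_sum, smul_smul]

lemma alignedG_apply {n m : ℕ} (vs : Fin m → EuclideanSpace ℝ (Fin n))
    (c : EuclideanSpace ℝ (Fin m)) : alignedG vs c = ∑ i, c i • vs i := rfl

/-- Construction of the aligned orthonormal basis, with bound `√2 * t` where `t` bounds the
defect of the orthogonal projection onto `Z` on unit vectors of the tail span. -/
lemma aligned_construct (n k : ℕ) (hk : k ≤ n)
    (vstar : Fin n → EuclideanSpace ℝ (Fin n)) (hON : Orthonormal ℝ vstar)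
    (Z : Submodule ℝ (EuclideanSpace ℝ (Fin n))) (hZ : finrank ℝ Z = n - k)
    (t : ℝ) (ht0 : 0 ≤ t) (ht1 : t ≤ 1)
    (ht : ∀ x : EuclideanSpace ℝ (Fin n),
      x ∈ span ℝ (Set.range fun i : Fin (n - k) =>
            vstar ⟨k + i, by have := i.isLt; omega⟩) →
      ‖x‖ = 1 → ‖x - (orthogonalProjection Z x : EuclideanSpace ℝ (Fin n))‖ ≤ t) :
    ∃ u : Fin (n - k) → EuclideanSpace ℝ (Fin n),
      Orthonormal ℝ u ∧ span ℝ (Set.range u) = Z ∧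
      ∀ w : Fin (n - k) → ℝ, Real.sqrt (∑ i, w i ^ 2) = 1 →
        ‖(∑ i, w i • u i)
            - ∑ i : Fin (n - k), w i • vstar ⟨k + i, by have := i.isLt; omega⟩‖
          ≤ Real.sqrt 2 * t := by
  classical
  have ht2 : 0 ≤ 1 - t ^ 2 := by nlinarith
  have hs00 : 0 ≤ Real.sqrt (1 - t ^ 2) := Real.sqrt_nonneg _
  have hs0sq : Real.sqrt (1 - t ^ 2) ^ 2 = 1 - t ^ 2 := Real.sq_sqrt ht2
  have hs01 : Real.sqrt (1 - t ^ 2) ≤ 1 := by nlinarith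
  have hkey : 1 - t ^ 2 ≤ Real.sqrt (1 - t ^ 2) := by nlinarith
  set vs : Fin (n - k) → EuclideanSpace ℝ (Fin n) :=
    fun i => vstar ⟨k + i, by have := i.isLt; omega⟩ with hvs
  have hvs_on : Orthonormal ℝ vs := by
    apply hON.comp
    intro i j hij
    have : k + (i : ℕ) = k + (j : ℕ) := congrArg Fin.val hij
    exact Fin.ext (by omega)
  set g := alignedG vs with hg
  have hg_norm2 : ∀ c : EuclideanSpace ℝ (Fin (n - k)), ‖g c‖ ^ 2 = ∑ i, c i ^ 2 := by
    intro c
    rw [hg, alignedG_apply]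
    exact aligned_norm_sum hvs_on c
  have hg_mem : ∀ c : EuclideanSpace ℝ (Fin (n - k)), g c ∈ span ℝ (Set.range vs) := by
    intro c
    rw [hg, alignedG_apply]
    exact Submodule.sum_mem _ fun i _ =>
      Submodule.smul_mem _ _ (Submodule.subset_span (Set.mem_range_self i))
  set T : EuclideanSpace ℝ (Fin (n - k)) →ₗ[ℝ] EuclideanSpace ℝ (Fin n) :=
    (Z.subtype ∘ₗ (orthogonalProjection Z).toLinearMap) ∘ₗ g with hT
  have hT_apply : ∀ c, T c = (orthogonalProjection Z (g c) : EuclideanSpace ℝ (Fin n)) :=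
    fun c => rfl
  have hT_mem : ∀ c, T c ∈ Z := fun c => (orthogonalProjection Z (g c)).2
  set S := (LinearMap.adjoint T) ∘ₗ T with hS
  have hS_inner : ∀ a b : EuclideanSpace ℝ (Fin (n - k)), ⟪S a, b⟫ = ⟪T a, T b⟫ := by
    intro a b
    rw [hS]
    exact LinearMap.adjoint_inner_left T b (T a)
  have hSsym : S.IsSymmetric := by
    intro a b
    rw [hS_inner]
    rw [show (S b) = LinearMap.adjoint T (T b) from rfl]
    rw [LinearMap.adjoint_inner_right]
  have hmF : finrank ℝ (EuclideanSpace ℝ (Fin (n - k))) = n - k := finrank_euclideanSpace_fin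
  set b : OrthonormalBasis (Fin (n - k)) ℝ (EuclideanSpace ℝ (Fin (n - k))) :=
    hSsym.eigenvectorBasis hmF with hb
  set μ : Fin (n - k) → ℝ := hSsym.eigenvalues hmF with hμ
  have hSb : ∀ i, S (b i) = μ i • b i := fun i => hSsym.apply_eigenvectorBasis hmF i
  have hTbTb : ∀ i j, ⟪T (b i), T (b j)⟫ = if i = j then μ i else 0 := by
    intro i j
    rw [← hS_inner, hSb, real_inner_smul_left]
    rw [orthonormal_iff_ite.mp b.orthonormal i j]
    by_cases h : i = j <;> simp [h]
  set σ : Fin (n - k) → ℝ := fun i => ‖T (b i)‖ with hσ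
  have hσ0 : ∀ i, 0 ≤ σ i := fun i => norm_nonneg _
  have hσ2 : ∀ i, σ i ^ 2 = μ i := by
    intro i
    rw [hσ]
    simp only
    rw [← real_inner_self_eq_norm_sq, hTbTb i i, if_pos rfl]
  set s : Set (Fin (n - k)) := {i | T (b i) ≠ 0} with hs
  set fq : Fin (n - k) → Z := fun i =>
    if h : T (b i) = 0 then 0 else ⟨(σ i)⁻¹ • T (b i), Submodule.smul_mem _ _ (hT_mem _)⟩
    with hfq
  have hfq_res : Orthonormal ℝ (s.restrict fq) := by
    rw [orthonormal_iff_ite]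
    rintro ⟨i, hi⟩ ⟨j, hj⟩
    have hi' : T (b i) ≠ 0 := hi
    have hj' : T (b j) ≠ 0 := hj
    have hinner : ⟪(s.restrict fq ⟨i, hi⟩ : Z), s.restrict fq ⟨j, hj⟩⟫ =
        (σ i)⁻¹ * ((σ j)⁻¹ * ⟪T (b i), T (b j)⟫) := by
      simp only [Set.restrict_apply, hfq, dif_neg hi', dif_neg hj']
      rw [Submodule.coe_inner]
      show ⟪((fq i : Z) : EuclideanSpace ℝ (Fin n)), ((fq j : Z) : EuclideanSpace ℝ (Fin n))⟫ = _
      simp only [hfq, dif_neg hi', dif_neg hj']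
      rw [real_inner_smul_left, real_inner_smul_right]
    rw [hinner, hTbTb i j]
    by_cases h : i = j
    · subst h
      rw [if_pos rfl, if_pos rfl, ← hσ2 i]
      have hσi : σ i ≠ 0 := by
        simp only [hσ, ne_eq, norm_eq_zero]
        exact hi'
      field_simp
    · have h2 : (⟨i, hi⟩ : s) ≠ ⟨j, hj⟩ := by simpa using h
      rw [if_neg h, if_neg h2, mul_zero, mul_zero]
  have hcard : finrank ℝ Z = Fintype.card (Fin (n - k)) := by
    rw [hZ, Fintype.card_fin]
  obtain ⟨f, hf⟩ := hfq_res.exists_orthonormalBasis_extension_of_card_eq hcard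
  have hTf : ∀ i, T (b i) = σ i • (f i : EuclideanSpace ℝ (Fin n)) := by
    intro i
    by_cases h : T (b i) = 0
    · have h0 : σ i = 0 := by rw [hσ]; simpa using h
      rw [h, h0, zero_smul]
    · have hσi : σ i ≠ 0 := by rw [hσ]; simpa using h
      have hfi : (f i : EuclideanSpace ℝ (Fin n)) = (σ i)⁻¹ • T (b i) := by
        rw [hf i h, hfq]
        simp only [dif_neg h]
      rw [hfi, smul_smul, mul_inv_cancel₀ hσi, one_smul]
  -- the aligned orthonormal family
  set u : Fin (n - k) → EuclideanSpace ℝ (Fin n) :=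
    fun i => ∑ j, (b j) i • (f j : EuclideanSpace ℝ (Fin n)) with hu
  have hnormF : ∀ c : EuclideanSpace ℝ (Fin (n - k)), ‖c‖ ^ 2 = ∑ i, c i ^ 2 := by
    intro c
    rw [EuclideanSpace.norm_eq, Real.sq_sqrt (Finset.sum_nonneg fun _ _ => sq_nonneg _)]
    congr 1; ext i; rw [Real.norm_eq_abs, sq_abs]
  -- coerced f is orthonormal in E
  have hcoe_on : Orthonormal ℝ (fun j => (f j : EuclideanSpace ℝ (Fin n))) := by
    rw [orthonormal_iff_ite]
    intro i j
    rw [← Submodule.coe_inner]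
    exact orthonormal_iff_ite.mp f.orthonormal i j
  have hu_inner : ∀ c c' : Fin (n - k) → ℝ,
      ⟪∑ j, c j • (f j : EuclideanSpace ℝ (Fin n)),
        ∑ j, c' j • (f j : EuclideanSpace ℝ (Fin n))⟫ = ∑ j, c j * c' j := by
    intro c c'
    have := hcoe_on.inner_sum c c' Finset.univ
    simpa using this
  -- Parseval with coordinates
  have hbb : ∀ i i' : Fin (n - k), ∑ j, (b j) i * (b j) i' = if i = i' then (1:ℝ) else 0 := by
    intro i i'
    have h1 := b.sum_inner_mul_inner (EuclideanSpace.single i (1:ℝ))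
      (EuclideanSpace.single i' (1:ℝ))
    simp only [EuclideanSpace.inner_single_left, EuclideanSpace.inner_single_right,
      map_one, one_mul, mul_one, conj_trivial] at h1
    rw [h1]
    simp [EuclideanSpace.single_apply, eq_comm]
  have hu_on : Orthonormal ℝ u := by
    rw [orthonormal_iff_ite]
    intro i i'
    rw [hu]
    simp only
    rw [hu_inner (fun j => (b j) i) (fun j => (b j) i'), hbb]
  -- general resummation
  have hsum : ∀ c : Fin (n - k) → ℝ, ∑ i, c i • u i =
      ∑ j, (∑ i, c i * (b j) i) • (f j : EuclideanSpace ℝ (Fin n)) := by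
    intro c
    calc ∑ i, c i • u i = ∑ i, ∑ j, (c i * (b j) i) • (f j : EuclideanSpace ℝ (Fin n)) := by
          refine Finset.sum_congr rfl fun i _ => ?_
          rw [hu]
          simp only
          rw [Finset.smul_sum]
          refine Finset.sum_congr rfl fun j _ => ?_
          rw [smul_smul]
      _ = ∑ j, ∑ i, (c i * (b j) i) • (f j : EuclideanSpace ℝ (Fin n)) := Finset.sum_comm
      _ = ∑ j, (∑ i, c i * (b j) i) • (f j : EuclideanSpace ℝ (Fin n)) := by
          refine Finset.sum_congr rfl fun j _ => ?_
          rw [← Finset.sum_smul]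
  have hbb2 : ∀ j j' : Fin (n - k), ∑ i, (b j) i * (b j') i = if j = j' then (1:ℝ) else 0 := by
    intro j j'
    have := orthonormal_iff_ite.mp b.orthonormal j j'
    simp only [PiLp.inner_apply, RCLike.inner_apply, conj_trivial] at this
    rw [← this]
    exact Finset.sum_congr rfl fun i _ => mul_comm _ _
  -- span
  have hspan : span ℝ (Set.range u) = Z := by
    apply le_antisymm
    · rw [Submodule.span_le]
      rintro _ ⟨i, rfl⟩
      exact Submodule.sum_mem _ fun j _ => Submodule.smul_mem _ _ (f j).2
    · intro z hz
      have hfj : ∀ j, (f j : EuclideanSpace ℝ (Fin n)) ∈ span ℝ (Set.range u) := by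
        intro j
        have h2 : (f j : EuclideanSpace ℝ (Fin n)) = ∑ i, (b j) i • u i := by
          rw [hsum (fun i => (b j) i)]
          have h3 : ∀ j', (∑ i, (b j) i * (b j') i) • (f j' : EuclideanSpace ℝ (Fin n)) =
              (if j = j' then (1:ℝ) else 0) • (f j' : EuclideanSpace ℝ (Fin n)) := by
            intro j'; rw [hbb2]
          rw [Finset.sum_congr rfl fun j' _ => h3 j']
          simp only [ite_smul, one_smul, zero_smul, Finset.sum_ite_eq, Finset.mem_univ,
            if_true]
        rw [h2]
        exact Submodule.sum_mem _ fun i _ =>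
          Submodule.smul_mem _ _ (Submodule.subset_span (Set.mem_range_self i))
      have hz2 : (⟨z, hz⟩ : Z) = ∑ j, f.repr ⟨z, hz⟩ j • f j := (f.sum_repr ⟨z, hz⟩).symm
      have hz3 : z = ∑ j, f.repr ⟨z, hz⟩ j • (f j : EuclideanSpace ℝ (Fin n)) := by
        have h4 := congrArg (Submodule.subtype Z) hz2
        rw [map_sum] at h4
        simpa using h4
      rw [hz3]
      exact Submodule.sum_mem _ fun j _ => Submodule.smul_mem _ _ (hfj j)
  refine ⟨u, hu_on, hspan, ?_⟩
  -- the quantitative bound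
  intro w hw
  have hw1 : ∑ i, w i ^ 2 = 1 := by
    have h0 : (0:ℝ) ≤ ∑ i, w i ^ 2 := Finset.sum_nonneg fun _ _ => sq_nonneg _
    have := congrArg (fun r : ℝ => r ^ 2) hw
    simpa [Real.sq_sqrt h0] using this
  set wF : EuclideanSpace ℝ (Fin (n - k)) := (WithLp.equiv 2 (Fin (n - k) → ℝ)).symm w with hwF
  have hwFi : ∀ i, wF i = w i := fun i => rfl
  set cw : Fin (n - k) → ℝ := fun j => ⟪b j, wF⟫ with hcw
  have hwrep : ∑ j, cw j • b j = wF := b.sum_repr' wF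
  set x : EuclideanSpace ℝ (Fin n) := ∑ i, w i • vs i with hx
  have hgw : g wF = x := by
    rw [hg, alignedG_apply, hx]
    exact Finset.sum_congr rfl fun i _ => by rw [hwFi]
  have hx1 : ‖x‖ = 1 := by
    have h1 : ‖x‖ ^ 2 = ∑ i, w i ^ 2 := aligned_norm_sum hvs_on w
    rw [hw1] at h1
    rw [← Real.sqrt_sq (norm_nonneg x), h1, Real.sqrt_one]
  have hxmem : x ∈ span ℝ (Set.range vs) := by
    rw [hx]
    exact Submodule.sum_mem _ fun i _ =>
      Submodule.smul_mem _ _ (Submodule.subset_span (Set.mem_range_self i))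
  have hproj : ‖x - (orthogonalProjection Z x : EuclideanSpace ℝ (Fin n))‖ ≤ t := ht x hxmem hx1
  have hTx : T wF = (orthogonalProjection Z x : EuclideanSpace ℝ (Fin n)) := by
    rw [hT_apply, hgw]
  have hTw : T wF = ∑ j, (cw j * σ j) • (f j : EuclideanSpace ℝ (Fin n)) := by
    calc T wF = T (∑ j, cw j • b j) := by rw [hwrep]
      _ = ∑ j, cw j • T (b j) := by
          rw [map_sum]
          exact Finset.sum_congr rfl fun j _ => T.map_smul _ _
      _ = ∑ j, (cw j * σ j) • (f j : EuclideanSpace ℝ (Fin n)) := by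
          refine Finset.sum_congr rfl fun j _ => ?_
          rw [hTf j, smul_smul]
  have hcw1 : ∑ j, cw j ^ 2 = 1 := by
    have h1 := b.sum_inner_mul_inner wF wF
    have h2 : ∀ j, ⟪wF, b j⟫ = cw j := by
      intro j
      rw [hcw]
      exact real_inner_comm (b j) wF
    have h3 : ⟪wF, wF⟫ = 1 := by
      rw [real_inner_self_eq_norm_sq, hnormF]
      simp only [hwFi]
      exact hw1
    rw [h3] at h1
    rw [← h1]
    exact Finset.sum_congr rfl fun j _ => by rw [h2 j, hcw, sq]
  -- lower bound on singular values
  have hσt : ∀ j, Real.sqrt (1 - t ^ 2) ≤ σ j := by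
    intro j
    have hbj1 : ‖g (b j)‖ = 1 := by
      have h1 : ‖g (b j)‖ ^ 2 = ∑ i, (b j) i ^ 2 := hg_norm2 (b j)
      have h2 : ‖b j‖ ^ 2 = ∑ i, (b j) i ^ 2 := hnormF (b j)
      have h3 : ‖b j‖ = 1 := b.orthonormal.1 j
      rw [← Real.sqrt_sq (norm_nonneg (g (b j))), h1, ← h2, h3]
      simp
    have hproj_j : ‖g (b j) - (orthogonalProjection Z (g (b j)) :
        EuclideanSpace ℝ (Fin n))‖ ≤ t := ht (g (b j)) (hg_mem (b j)) hbj1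
    have hpy := aligned_pyth Z (g (b j))
    rw [hbj1] at hpy
    have hσj : σ j = ‖(orthogonalProjection Z (g (b j)) : EuclideanSpace ℝ (Fin n))‖ := by
      rw [hσ]
      simp only
      rw [hT_apply]
    have h4 : 1 - t ^ 2 ≤ σ j ^ 2 := by
      have h5 : ‖g (b j) - (orthogonalProjection Z (g (b j)) :
          EuclideanSpace ℝ (Fin n))‖ ^ 2 ≤ t ^ 2 := by
        have := norm_nonneg (g (b j) - (orthogonalProjection Z (g (b j)) :
          EuclideanSpace ℝ (Fin n)))
        nlinarith
      rw [hσj]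
      nlinarith
    calc Real.sqrt (1 - t ^ 2) ≤ Real.sqrt (σ j ^ 2) := Real.sqrt_le_sqrt h4
      _ = σ j := Real.sqrt_sq (hσ0 j)
  -- decompose the difference
  set A : EuclideanSpace ℝ (Fin n) :=
    ∑ j, (cw j * (1 - σ j)) • (f j : EuclideanSpace ℝ (Fin n)) with hA
  set B : EuclideanSpace ℝ (Fin n) := T wF - x with hB
  have hcw_eq : ∀ j, ∑ i, w i * (b j) i = cw j := by
    intro j
    rw [hcw]
    simp only
    rw [PiLp.inner_apply]
    simp only [RCLike.inner_apply, conj_trivial, hwFi]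
  have hdiff : (∑ i, w i • u i) - x = A + B := by
    have h1 : ∑ i, w i • u i = ∑ j, cw j • (f j : EuclideanSpace ℝ (Fin n)) := by
      rw [hsum w]
      exact Finset.sum_congr rfl fun j _ => by rw [hcw_eq j]
    have h2 : (∑ j, cw j • (f j : EuclideanSpace ℝ (Fin n))) - T wF = A := by
      rw [hTw, hA, ← Finset.sum_sub_distrib]
      refine Finset.sum_congr rfl fun j _ => ?_
      rw [← sub_smul]
      congr 1
      ring
    rw [h1, hB, ← h2]
    abel
  have hAB : ⟪A, B⟫ = 0 := by
    have hAZ : A ∈ Z := Submodule.sum_mem _ fun j _ => Submodule.smul_mem _ _ (f j).2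
    have hBZ : B ∈ Zᗮ := by
      rw [hB, hTx]
      have := Submodule.sub_starProjection_mem_orthogonal (K := Z) x
      simpa using Submodule.neg_mem _ this
    exact Submodule.inner_right_of_mem_orthogonal hAZ hBZ
  have hnA : ‖A‖ ^ 2 = ∑ j, (cw j * (1 - σ j)) ^ 2 := by
    rw [hA]
    exact aligned_norm_sum hcoe_on _
  have hnT : ‖T wF‖ ^ 2 = ∑ j, (cw j * σ j) ^ 2 := by
    rw [hTw]
    exact aligned_norm_sum hcoe_on _
  have hnB : ‖B‖ ^ 2 = 1 - ∑ j, (cw j * σ j) ^ 2 := by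
    have hpy := aligned_pyth Z x
    rw [hx1] at hpy
    have h1 : ‖B‖ = ‖x - (orthogonalProjection Z x : EuclideanSpace ℝ (Fin n))‖ := by
      rw [hB, hTx, norm_sub_rev]
    rw [h1, ← hnT, hTx]
    linarith
  have hdiff2 : ‖(∑ i, w i • u i) - x‖ ^ 2 = ∑ j, cw j ^ 2 * (2 - 2 * σ j) := by
    rw [hdiff]
    rw [norm_add_sq_real, hAB, hnA, hnB]
    have h1 : (1:ℝ) = ∑ j, cw j ^ 2 := hcw1.symm
    calc (∑ j, (cw j * (1 - σ j)) ^ 2) + 2 * 0 + (1 - ∑ j, (cw j * σ j) ^ 2)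
        = (∑ j, (cw j * (1 - σ j)) ^ 2) + ((∑ j, cw j ^ 2) - ∑ j, (cw j * σ j) ^ 2) := by
          rw [← h1]; ring
      _ = ∑ j, ((cw j * (1 - σ j)) ^ 2 + (cw j ^ 2 - (cw j * σ j) ^ 2)) := by
          rw [Finset.sum_add_distrib, Finset.sum_sub_distrib]
      _ = ∑ j, cw j ^ 2 * (2 - 2 * σ j) := by
          exact Finset.sum_congr rfl fun j _ => by ring
  -- conclude
  have hfinal2 : ‖(∑ i, w i • u i) - x‖ ^ 2 ≤ 2 * t ^ 2 := by
    rw [hdiff2]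
    calc ∑ j, cw j ^ 2 * (2 - 2 * σ j)
        ≤ ∑ j, cw j ^ 2 * (2 - 2 * Real.sqrt (1 - t ^ 2)) := by
          refine Finset.sum_le_sum fun j _ =>
            mul_le_mul_of_nonneg_left ?_ (sq_nonneg (cw j))
          have := hσt j
          linarith
      _ = (2 - 2 * Real.sqrt (1 - t ^ 2)) * ∑ j, cw j ^ 2 := by
          rw [Finset.mul_sum]
          exact Finset.sum_congr rfl fun j _ => mul_comm _ _
      _ = 2 - 2 * Real.sqrt (1 - t ^ 2) := by rw [hcw1, mul_one]
      _ ≤ 2 * t ^ 2 := by linarith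
  have hfinal : ‖(∑ i, w i • u i) - x‖ ≤ Real.sqrt 2 * t := by
    have h1 := Real.sqrt_le_sqrt hfinal2
    rw [Real.sqrt_sq (norm_nonneg _)] at h1
    calc ‖(∑ i, w i • u i) - x‖ ≤ Real.sqrt (2 * t ^ 2) := h1
      _ = Real.sqrt 2 * t := by
          rw [Real.sqrt_mul (by norm_num : (0:ℝ) ≤ 2), Real.sqrt_sq ht0]
  exact hfinal

/-- Existence of an aligned orthonormal basis: given an orthonormal basis
`v*_1,…,v*_n` and linearly independent unit vectors `v_1,…,v_k` with
`‖v_i - v*_i‖ ≤ γ < 0.01`, there is an orthonormal basis `u_1,…,u_{n-k}` of the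
orthogonal complement of `span{v_1,…,v_k}` such that for every unit
`w ∈ ℝ^{n-k}`, `‖∑ w_i u_i - ∑ w_i v*_{k+i}‖ ≤ 3 √n γ`. -/
theorem exists_aligned_orthonormal_basis
    (n k : ℕ) (hk : k ≤ n) (γ : ℝ) (hγ0 : 0 < γ) (hγ : γ < 0.01)
    (vstar : Fin n → EuclideanSpace ℝ (Fin n)) (hON : Orthonormal ℝ vstar)
    (v : Fin k → EuclideanSpace ℝ (Fin n)) (hli : LinearIndependent ℝ v)
    (hunit : ∀ i, ‖v i‖ = 1)
    (hclose : ∀ i : Fin k, ‖v i - vstar (Fin.castLE hk i)‖ ≤ γ) :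
    ∃ u : Fin (n - k) → EuclideanSpace ℝ (Fin n),
      Orthonormal ℝ u ∧
      Submodule.span ℝ (Set.range u) = (Submodule.span ℝ (Set.range v))ᗮ ∧
      ∀ w : Fin (n - k) → ℝ, Real.sqrt (∑ i, w i ^ 2) = 1 →
        ‖(∑ i, w i • u i)
            - ∑ i : Fin (n - k), w i • vstar ⟨k + i, by have := i.isLt; omega⟩‖
          ≤ 3 * Real.sqrt n * γ := by
  classical
  have hfinV : finrank ℝ (Submodule.span ℝ (Set.range v)) = k := by
    rw [finrank_span_eq_card hli, Fintype.card_fin]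
  have hfinE : finrank ℝ (EuclideanSpace ℝ (Fin n)) = n := finrank_euclideanSpace_fin
  have hZ : finrank ℝ ((Submodule.span ℝ (Set.range v))ᗮ) = n - k := by
    have := Submodule.finrank_add_finrank_orthogonal (Submodule.span ℝ (Set.range v))
    rw [hfinV, hfinE] at this
    omega
  -- tail span vectors are orthogonal to the first k vstar's
  have hxo : ∀ x, x ∈ span ℝ (Set.range fun i : Fin (n - k) =>
      vstar ⟨k + i, by have := i.isLt; omega⟩) →
      ∀ j : Fin k, ⟪vstar (Fin.castLE hk j), x⟫ = 0 := by
    intro x hx j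
    induction hx using Submodule.span_induction with
    | mem y hy =>
        obtain ⟨i, rfl⟩ := hy
        refine hON.2 ?_
        intro h
        have := congrArg Fin.val h
        simp only [Fin.castLE, Fin.val_mk] at this
        omega
    | zero => exact inner_zero_right _
    | add a b ha hb iha ihb => rw [inner_add_right, iha, ihb, add_zero]
    | smul r a ha iha => rw [real_inner_smul_right, iha, mul_zero]
  have hsqkn : Real.sqrt k ≤ Real.sqrt n := Real.sqrt_le_sqrt (Nat.cast_le.mpr hk)
  have hsq2 : Real.sqrt 2 ≤ 1.5 := by
    have h1 : Real.sqrt 2 ^ 2 = 2 := Real.sq_sqrt (by norm_num)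
    nlinarith [Real.sqrt_nonneg 2]
  have hsqk0 : 0 ≤ Real.sqrt k * γ := mul_nonneg (Real.sqrt_nonneg _) hγ0.le
  by_cases hcase : Real.sqrt k * γ ≤ 1 / 2
  · -- small-perturbation case
    have hδ1 : Real.sqrt k * γ < 1 := lt_of_le_of_lt hcase (by norm_num)
    have ht01 : 0 ≤ 1 - Real.sqrt k * γ := by linarith
    obtain ⟨u, hon, hspan, hbound⟩ := aligned_construct n k hk vstar hON
      (Submodule.span ℝ (Set.range v))ᗮ hZ
      (Real.sqrt k * γ / (1 - Real.sqrt k * γ))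
      (div_nonneg hsqk0 ht01)
      (by rw [div_le_one (by linarith)]; linarith)
      (fun x hx hx1 => aligned_proj_bound n k hk γ hγ0 vstar hON v hclose hδ1 x hx1
        (hxo x hx))
    refine ⟨u, hon, hspan, ?_⟩
    intro w hw
    refine le_trans (hbound w hw) ?_
    have h1 : Real.sqrt k * γ / (1 - Real.sqrt k * γ) ≤ 2 * (Real.sqrt k * γ) := by
      rw [div_le_iff₀ (by linarith)]
      nlinarith
    calc Real.sqrt 2 * (Real.sqrt k * γ / (1 - Real.sqrt k * γ))
        ≤ Real.sqrt 2 * (2 * (Real.sqrt k * γ)) :=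
          mul_le_mul_of_nonneg_left h1 (Real.sqrt_nonneg 2)
      _ ≤ 1.5 * (2 * (Real.sqrt k * γ)) := by
          refine mul_le_mul_of_nonneg_right hsq2 (by positivity)
      _ = 3 * Real.sqrt k * γ := by ring
      _ ≤ 3 * Real.sqrt n * γ := by nlinarith
  · -- large-perturbation case: the trivial bound √2 suffices
    push_neg at hcase
    obtain ⟨u, hon, hspan, hbound⟩ := aligned_construct n k hk vstar hON
      (Submodule.span ℝ (Set.range v))ᗮ hZ 1 zero_le_one le_rfl
      (fun x hx hx1 => by
        have hpy := aligned_pyth (Submodule.span ℝ (Set.range v))ᗮ x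
        rw [hx1] at hpy
        have h1 := norm_nonneg (x - (orthogonalProjection (Submodule.span ℝ (Set.range v))ᗮ x :
          EuclideanSpace ℝ (Fin n)))
        have h2 := norm_nonneg ((orthogonalProjection (Submodule.span ℝ (Set.range v))ᗮ x :
          EuclideanSpace ℝ (Fin n)))
        nlinarith)
    refine ⟨u, hon, hspan, ?_⟩
    intro w hw
    refine le_trans (hbound w hw) ?_
    have h1 : 1 / 2 < Real.sqrt n * γ := lt_of_lt_of_le hcase
      (mul_le_mul_of_nonneg_right hsqkn hγ0.le)
    calc Real.sqrt 2 * 1 = Real.sqrt 2 := mul_one _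
      _ ≤ 1.5 := hsq2
      _ ≤ 3 * Real.sqrt n * γ := by nlinarith
end

section
/- Separation by quartic values: let f(u) = \sum_i d_i (u^T R_i)^4 where R is orthogonal and 0 < d_min ≤ d_i ≤ d_max. If a unit vector v satisfies |v^T R_i| > 1 - d_min/(100 d_max), then f(v) > f(u) for every unit vector u with |u^T R_i| ∈ [1 - d_min/(25 d_max), 1 - d_min/(50 d_max)]. -/
set_option maxHeartbeats 1000000


/-- Separation by quartic values: let `f(u) = ∑ j d_j (uᵀR_j)^4` with `R` orthogonal
and `0 < d_min ≤ d_j ≤ d_max`. If a unit vector `v` has `|vᵀR_i| > 1 - d_min/(100 d_max)`,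
then `f(v) > f(u)` for every unit `u` with
`|uᵀR_i| ∈ [1 - d_min/(25 d_max), 1 - d_min/(50 d_max)]`. -/
theorem quartic_value_separation
    (n : ℕ) (dmin dmax : ℝ) (h0 : 0 < dmin) (hle : dmin ≤ dmax)
    (R : Matrix (Fin n) (Fin n) ℝ) (hR : R * R.transpose = 1)
    (d : Fin n → ℝ) (hd : ∀ j, d j ∈ Set.Icc dmin dmax)
    (v u : Fin n → ℝ) (hv : ∑ j, v j ^ 2 = 1) (hu : ∑ j, u j ^ 2 = 1)
    (i : Fin n)
    (hvi : 1 - dmin / (100 * dmax) < |∑ j, v j * R j i|)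
    (hui : |∑ j, u j * R j i| ∈
      Set.Icc (1 - dmin / (25 * dmax)) (1 - dmin / (50 * dmax))) :
    ∑ j, d j * (∑ l, u l * R l j) ^ 4 < ∑ j, d j * (∑ l, v l * R l j) ^ 4 := by
  have hdmax : 0 < dmax := lt_of_lt_of_le h0 hle
  set a : ℝ := dmin / (100 * dmax) with ha_def
  have ha0 : 0 < a := div_pos h0 (by positivity)
  have ha : a ≤ 1 / 100 := by
    rw [ha_def, div_le_div_iff₀ (by positivity) (by norm_num)]; linarith
  have haa : a * (100 * dmax) = dmin := div_mul_cancel₀ _ (by positivity)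
  set b : Fin n → ℝ := fun j => ∑ l, u l * R l j with hb_def
  set c : Fin n → ℝ := fun j => ∑ l, v l * R l j with hc_def
  -- orthogonality : entries
  have hRR : ∀ l m, ∑ j, R l j * R m j = if l = m then 1 else 0 := by
    intro l m
    have := congrFun (congrFun hR l) m
    simpa [Matrix.mul_apply, Matrix.transpose_apply, Matrix.one_apply] using this
  have key : ∀ w : Fin n → ℝ, (∑ j, w j ^ 2 = 1) →
      ∑ j, (∑ l, w l * R l j) ^ 2 = 1 := by
    intro w hw
    calc ∑ j, (∑ l, w l * R l j) ^ 2
        = ∑ j, ∑ l, ∑ m, (w l * R l j) * (w m * R m j) := by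
          refine Finset.sum_congr rfl fun j _ => ?_
          rw [sq, Finset.sum_mul_sum]
      _ = ∑ l, ∑ m, w l * w m * ∑ j, R l j * R m j := by
          rw [Finset.sum_comm]
          refine Finset.sum_congr rfl fun l _ => ?_
          rw [Finset.sum_comm]
          refine Finset.sum_congr rfl fun m _ => ?_
          rw [Finset.mul_sum]
          refine Finset.sum_congr rfl fun j _ => ?_
          ring
      _ = ∑ l, w l ^ 2 := by
          refine Finset.sum_congr rfl fun l _ => ?_
          simp only [hRR, mul_ite, mul_one, mul_zero]
          rw [Finset.sum_ite_eq Finset.univ l (fun _ => w l * w _)]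
          simp [sq]
      _ = 1 := hw
  show (∑ j, d j * b j ^ 4) < ∑ j, d j * c j ^ 4
  have hb1 : ∑ j, b j ^ 2 = 1 := key u hu
  have hc1 : ∑ j, c j ^ 2 = 1 := key v hv
  have hbi2 : b i ^ 2 ≤ 1 := by
    rw [← hb1]
    exact Finset.single_le_sum (fun j _ => sq_nonneg (b j)) (Finset.mem_univ i)
  -- bounds in terms of a
  have h25 : dmin / (25 * dmax) = 4 * a := by rw [ha_def]; field_simp; ring
  have h50 : dmin / (50 * dmax) = 2 * a := by rw [ha_def]; field_simp; ring
  have hy1 : 1 - 4 * a ≤ |b i| := by have := hui.1; rw [h25] at this; exact this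
  have hy2 : |b i| ≤ 1 - 2 * a := by have := hui.2; rw [h50] at this; exact this
  have hx : 1 - a < |c i| := hvi
  have hy0 : (0:ℝ) ≤ |b i| := abs_nonneg _
  have hx0 : (0:ℝ) ≤ 1 - a := by linarith
  -- pow identities
  have hbp : b i ^ 4 = |b i| ^ 4 := by rw [← abs_pow]; exact (abs_of_nonneg (by positivity)).symm
  have hcp : c i ^ 4 = |c i| ^ 4 := by rw [← abs_pow]; exact (abs_of_nonneg (by positivity)).symm
  have hbsq : b i ^ 2 = |b i| ^ 2 := (sq_abs _).symm
  -- split u-sum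
  have hsplit : ∑ j, d j * b j ^ 4
      = (∑ j ∈ Finset.univ.erase i, d j * b j ^ 4) + d i * b i ^ 4 :=
    (Finset.sum_erase_add _ _ (Finset.mem_univ i)).symm
  have herase2 : ∑ j ∈ Finset.univ.erase i, b j ^ 2 = 1 - b i ^ 2 := by
    have h := Finset.sum_erase_add Finset.univ (fun j => b j ^ 2) (Finset.mem_univ i)
    simp only [hb1] at h
    linarith
  have hstep1 : (∑ j ∈ Finset.univ.erase i, d j * b j ^ 4)
      ≤ dmax * (1 - b i ^ 2) ^ 2 := by
    calc (∑ j ∈ Finset.univ.erase i, d j * b j ^ 4)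
        ≤ ∑ j ∈ Finset.univ.erase i, dmax * b j ^ 4 := by
          refine Finset.sum_le_sum fun j _ => ?_
          exact mul_le_mul_of_nonneg_right (hd j).2 (by positivity)
      _ = dmax * ∑ j ∈ Finset.univ.erase i, (b j ^ 2) ^ 2 := by
          rw [Finset.mul_sum]; exact Finset.sum_congr rfl fun j _ => by ring
      _ ≤ dmax * (∑ j ∈ Finset.univ.erase i, b j ^ 2) ^ 2 := by
          refine mul_le_mul_of_nonneg_left ?_ (le_of_lt hdmax)
          exact Finset.sum_sq_le_sq_sum_of_nonneg (fun j _ => sq_nonneg _)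
      _ = dmax * (1 - b i ^ 2) ^ 2 := by rw [herase2]
  have hstep2 : d i * c i ^ 4 ≤ ∑ j, d j * c j ^ 4 := by
    refine Finset.single_le_sum (f := fun j => d j * c j ^ 4) (fun j _ => ?_) (Finset.mem_univ i)
    have h1 : 0 < d j := lt_of_lt_of_le h0 (hd j).1
    positivity
  -- final numeric inequality
  have hdi1 : dmin ≤ d i := (hd i).1
  have hxpow : (1 - a) ^ 4 < |c i| ^ 4 := by
    exact pow_lt_pow_left₀ hx hx0 (by norm_num)
  have hypow : |b i| ^ 4 ≤ (1 - 2 * a) ^ 4 := by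
    exact pow_le_pow_left₀ hy0 hy2 4
  have hysq : (1 - 4 * a) ^ 2 ≤ |b i| ^ 2 := by
    exact pow_le_pow_left₀ (by linarith) hy1 2
  have hysq' : |b i| ^ 2 ≤ 1 := by rw [← hbsq]; exact hbi2
  have hkey : dmin * ((1 - a) ^ 4 - (1 - 2 * a) ^ 4) > dmax * (1 - (1 - 4 * a) ^ 2) ^ 2 := by
    rw [← haa]
    have h1 : 0 < dmax := hdmax
    nlinarith [mul_pos ha0 ha0, sq_nonneg a, mul_pos (mul_pos ha0 ha0) hdmax,
      mul_pos (mul_pos (mul_pos ha0 ha0) ha0) hdmax]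
  have hfin : d i * b i ^ 4 + dmax * (1 - b i ^ 2) ^ 2 < d i * c i ^ 4 := by
    rw [hbp, hcp, hbsq]
    have hd0 : 0 < d i := lt_of_lt_of_le h0 hdi1
    have hA : d i * |b i| ^ 4 ≤ d i * (1 - 2 * a) ^ 4 :=
      mul_le_mul_of_nonneg_left hypow hd0.le
    have hB : d i * (1 - a) ^ 4 < d i * |c i| ^ 4 := mul_lt_mul_of_pos_left hxpow hd0
    have hsqle : (1 - |b i| ^ 2) ^ 2 ≤ (1 - (1 - 4 * a) ^ 2) ^ 2 :=
      pow_le_pow_left₀ (by linarith) (by linarith) 2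
    have hC : dmax * (1 - |b i| ^ 2) ^ 2 ≤ dmax * (1 - (1 - 4 * a) ^ 2) ^ 2 :=
      mul_le_mul_of_nonneg_left hsqle hdmax.le
    have hmono : (1 - 2 * a) ^ 4 ≤ (1 - a) ^ 4 :=
      pow_le_pow_left₀ (by linarith) (by linarith) 4
    have hD : dmin * ((1 - a) ^ 4 - (1 - 2 * a) ^ 4)
        ≤ d i * (1 - a) ^ 4 - d i * (1 - 2 * a) ^ 4 := by
      calc dmin * ((1 - a) ^ 4 - (1 - 2 * a) ^ 4)
          ≤ d i * ((1 - a) ^ 4 - (1 - 2 * a) ^ 4) :=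
            mul_le_mul_of_nonneg_right hdi1 (by linarith)
        _ = d i * (1 - a) ^ 4 - d i * (1 - 2 * a) ^ 4 := by ring
    linarith [hA, hB, hC, hD, hkey]
  calc ∑ j, d j * b j ^ 4
      ≤ dmax * (1 - b i ^ 2) ^ 2 + d i * b i ^ 4 := by rw [hsplit]; linarith
    _ < d i * c i ^ 4 := by linarith
    _ ≤ ∑ j, d j * c j ^ 4 := hstep2
end
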